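/- arXiv:2007.06652 — 7 statements merged into one kernel-verified Lean document; each statement's English description precedes it below -/
import Mathlib

section
/- Let p be a prime and let λ and μ be partitions of n. If ν is a partition of n obtained from μ by replacing p parts all of equal size m with a single part of size pm, then the irreducible character value χ^λ of the symmetric group S_n satisfies χ^λ(μ) ≡ χ^λ(ν) (mod p), where χ^λ(μ) denotes the value of χ^λ on the conjugacy class of permutations with cycle type μ. -/
open scoped BigOperators

/-- The irreducible character value `χ^λ_μ` of the symmetric group `S_n`, defined via the
Frobenius character formula: `χ^λ(μ)` is the coefficient of
`x₁^(λ₁+n-1) x₂^(λ₂+n-2) ⋯ xₙ^(λₙ)` in `∏_{i<j} (xᵢ - xⱼ) · ∏_i p_{μᵢ}(x)`,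
where `p_m(x) = Σᵢ xᵢ^m` is the power sum. -/
noncomputable def charSn (n : ℕ) (lam mu : Nat.Partition n) : ℤ :=
  MvPolynomial.coeff
    (Finsupp.equivFunOnFinite.symm fun i : Fin n =>
      ((lam.parts.sort (· ≤ ·)).reverse.getD i 0) + (n - 1 - (i : ℕ)))
    ((∏ i : Fin n, ∏ j ∈ Finset.univ.filter (fun j : Fin n => (i : ℕ) < (j : ℕ)),
        (MvPolynomial.X i - MvPolynomial.X j)) *
      (mu.parts.map (fun m => ∑ i : Fin n, MvPolynomial.X i ^ m)).prod)

/-- If `ν` is obtained from `μ` by replacing `p` parts of equal size `m` by a single part of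
size `p*m`, then `χ^λ_μ ≡ χ^λ_ν (mod p)`. -/
theorem char_modEq_of_merge (p : ℕ) (hp : p.Prime) (n m : ℕ) (hm : 0 < m)
    (lam mu nu : Nat.Partition n)
    (hle : Multiset.replicate p m ≤ mu.parts)
    (hnu : nu.parts = (mu.parts - Multiset.replicate p m) + {p * m}) :
    charSn n lam mu ≡ charSn n lam nu [ZMOD p] := by
  haveI : Fact p.Prime := ⟨hp⟩
  set φ : ℤ →+* ZMod p := Int.castRingHom (ZMod p)
  set d := (Finsupp.equivFunOnFinite.symm fun i : Fin n =>
      ((lam.parts.sort (· ≤ ·)).reverse.getD i 0) + (n - 1 - (i : ℕ)))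
  set V : MvPolynomial (Fin n) ℤ := (∏ i : Fin n, ∏ j ∈ Finset.univ.filter (fun j : Fin n => (i : ℕ) < (j : ℕ)),
        (MvPolynomial.X i - MvPolynomial.X j)) with hV
  set f : ℕ → MvPolynomial (Fin n) ℤ := fun m => ∑ i : Fin n, MvPolynomial.X i ^ m with hf
  have hmu : mu.parts = (mu.parts - Multiset.replicate p m) + Multiset.replicate p m :=
    (tsub_add_cancel_of_le hle).symm
  have key : MvPolynomial.map φ (V * (mu.parts.map f).prod)
      = MvPolynomial.map φ (V * (nu.parts.map f).prod) := by
    rw [map_mul, map_mul]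
    congr 1
    rw [hnu]
    conv_lhs => rw [hmu]
    rw [Multiset.map_add, Multiset.map_add, Multiset.prod_add, Multiset.prod_add,
      map_mul, map_mul]
    congr 1
    rw [Multiset.map_replicate, Multiset.prod_replicate, Multiset.map_singleton,
      Multiset.prod_singleton]
    simp only [hf, map_pow, map_sum, map_pow, MvPolynomial.map_X]
    rw [sum_pow_char]
    congr 1
    funext i
    rw [← pow_mul, mul_comm m p]
  have h1 : (charSn n lam mu : ZMod p) = (charSn n lam nu : ZMod p) := by
    show φ (charSn n lam mu) = φ (charSn n lam nu)
    unfold charSn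
    rw [← MvPolynomial.coeff_map, ← MvPolynomial.coeff_map, key]
  exact (ZMod.intCast_eq_intCast_iff _ _ _).mp h1
end

section
/- Let λ and μ be partitions of n and let t be a positive integer. If μ has a part of size t and λ is a t-core (i.e., no box in the Young diagram of λ has hook length divisible by t), then χ^λ_μ = 0. -/
open scoped BigOperators

/-- The `i`-th largest part of `μ` (0-indexed), i.e. the length of row `i` of its Young diagram. -/
def rowLen {n : ℕ} (μ : Nat.Partition n) (i : ℕ) : ℕ :=
  ((μ.parts.sort (· ≤ ·)).reverse).getD i 0

/-- The length of column `j` (0-indexed) of the Young diagram of `μ`. -/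
def colLen {n : ℕ} (μ : Nat.Partition n) (j : ℕ) : ℕ :=
  (μ.parts.filter (fun a => j < a)).card

/-- The hook length of the box `(i,j)` (0-indexed) of the Young diagram of `μ`:
`1` plus the number of boxes to the right plus the number of boxes below. -/
def hookLen {n : ℕ} (μ : Nat.Partition n) (i j : ℕ) : ℕ :=
  (rowLen μ i - j) + (colLen μ j - i) - 1


section AuxCore
open MvPolynomial

lemma rowLen_anti {n : ℕ} (lam : Nat.Partition n) {i j : ℕ} (hij : i ≤ j) :
    rowLen lam j ≤ rowLen lam i := by
  unfold rowLen
  set l := (lam.parts.sort (· ≤ ·)).reverse with hl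
  by_cases hj : j < l.length
  · have hi : i < l.length := lt_of_le_of_lt hij hj
    rw [List.getD_eq_getElem l 0 hj, List.getD_eq_getElem l 0 hi]
    have hs : l.Pairwise (· ≥ ·) := by
      rw [hl, List.pairwise_reverse]
      exact lam.parts.pairwise_sort (· ≤ ·)
    exact hs.rel_get_of_le (a := ⟨i, hi⟩) (b := ⟨j, hj⟩) hij
  · rw [List.getD_eq_default l 0 (le_of_not_gt hj)]
    exact Nat.zero_le _

lemma parts_card_le {n : ℕ} (lam : Nat.Partition n) : Multiset.card lam.parts ≤ n := by
  have h : ∀ x ∈ lam.parts, 1 ≤ x := fun x hx => lam.parts_pos hx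
  calc Multiset.card lam.parts = Multiset.card lam.parts * 1 := (mul_one _).symm
    _ ≤ lam.parts.sum := Multiset.card_nsmul_le_sum h
    _ = n := lam.parts_sum

lemma sum_range_ite (l : List ℕ) (p : ℕ → Prop) [DecidablePred p] :
    ∑ k ∈ Finset.range l.length, (if p (l.getD k 0) then 1 else 0) =
      (l.filter (fun a => p a)).length := by
  induction l with
  | nil => simp
  | cons a l ih =>
    rw [List.length_cons, Finset.sum_range_succ']
    simp only [List.getD_cons_succ, List.getD_cons_zero, ih, List.filter_cons]
    by_cases hpa : p a <;> simp [hpa]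

lemma colLen_eq {n : ℕ} (lam : Nat.Partition n) (j : ℕ) :
    colLen lam j = (Finset.univ.filter (fun k : Fin n => j < rowLen lam k)).card := by
  classical
  set l := (lam.parts.sort (· ≤ ·)).reverse with hl
  have hlen : l.length ≤ n := by
    rw [hl, List.length_reverse, Multiset.length_sort]
    exact parts_card_le lam
  have hparts : lam.parts = ↑l := by
    rw [hl, Multiset.coe_reverse, Multiset.sort_eq]
  have hL : colLen lam j = (l.filter (fun a => j < a)).length := by
    rw [colLen, hparts]
    simp [Multiset.filter_coe]
  rw [hL]
  rw [Finset.card_filter]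
  have key : ∀ k : Fin n, rowLen lam (k : ℕ) = l.getD (k : ℕ) 0 := fun k => rfl
  simp only [key]
  rw [Fin.sum_univ_eq_sum_range (fun m => if j < l.getD m 0 then 1 else 0) n]
  rw [← sum_range_ite l (fun a => j < a)]
  apply Finset.sum_subset
  · exact Finset.range_subset_range.2 hlen
  · intro x _ hx
    rw [Finset.mem_range, not_lt] at hx
    rw [List.getD_eq_default l 0 hx]
    simp

lemma beta_closed {n t : ℕ} (ht : 0 < t) (lam : Nat.Partition n)
    (hcore : ∀ i j, j < rowLen lam i → ¬ t ∣ hookLen lam i j)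
    (i : Fin n) (hti : t ≤ rowLen lam (i : ℕ) + (n - 1 - (i : ℕ))) :
    ∃ j : Fin n, rowLen lam (j : ℕ) + (n - 1 - (j : ℕ)) + t
      = rowLen lam (i : ℕ) + (n - 1 - (i : ℕ)) := by
  classical
  by_contra hcon
  push_neg at hcon
  set B : Fin n → ℕ := fun k => rowLen lam (k : ℕ) + (n - 1 - (k : ℕ)) with hB
  have hcon' : ∀ j : Fin n, B j + t ≠ B i := hcon
  have hBi : B i = rowLen lam (i : ℕ) + (n - 1 - (i : ℕ)) := rfl
  set y : ℕ := B i - t with hy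
  have hyt : y + t = B i := by omega
  have hne : ∀ k : Fin n, B k ≠ y := fun k hk => hcon' k (by omega)
  have hBanti : ∀ {a b : Fin n}, a < b → B b < B a := by
    intro a b hab
    have h1 : rowLen lam (b : ℕ) ≤ rowLen lam (a : ℕ) :=
      rowLen_anti lam (le_of_lt hab)
    have h2 : (a : ℕ) < (b : ℕ) := hab
    have h3 : (b : ℕ) < n := b.isLt
    have hBa : B a = rowLen lam (a : ℕ) + (n - 1 - (a : ℕ)) := rfl
    have hBb : B b = rowLen lam (b : ℕ) + (n - 1 - (b : ℕ)) := rfl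
    omega
  have hBinj : ∀ a b : Fin n, B a = B b → a = b := by
    intro a b hab
    rcases lt_trichotomy a b with h | h | h
    · exact absurd (hBanti h) (by omega)
    · exact h
    · exact absurd (hBanti h) (by omega)
  have hBlt : ∀ {a b : Fin n}, B b < B a → a < b := by
    intro a b h
    rcases lt_trichotomy a b with h' | h' | h'
    · exact h'
    · subst h'; omega
    · exact absurd (hBanti h') (by omega)
  have hinj : ∀ (s : Finset (Fin n)) (lo hi : ℕ),
      (∀ m ∈ s, lo < B m ∧ B m < hi) → s.card ≤ hi - lo - 1 := by
    intro s lo hi h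
    have := Finset.card_le_card_of_injOn B
      (fun a ha => Finset.mem_Ioo.2 (h a ha))
      (fun a _ b _ hab => hBinj a b hab)
    simpa [Nat.card_Ioo] using this
  set c : ℕ := (Finset.univ.filter (fun k : Fin n => B k < y)).card with hc
  have hcy : c ≤ y := by
    have h : (Finset.univ.filter (fun k : Fin n => B k < y)).card ≤ (Finset.range y).card := by
      apply Finset.card_le_card_of_injOn B
      · intro a ha
        simp only [Finset.mem_coe, Finset.mem_filter] at ha
        exact Finset.mem_range.2 ha.2
      · exact fun a _ b _ hab => hBinj a b hab
    rw [Finset.card_range] at h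
    exact h
  have hclaimA : ∀ k : Fin n, (y - c < rowLen lam (k : ℕ) ↔ y < B k) := by
    intro k
    have hBk : B k = rowLen lam (k : ℕ) + (n - 1 - (k : ℕ)) := rfl
    have hkn : (k : ℕ) < n := k.isLt
    constructor
    · intro hlt
      by_contra hgt
      have hky : B k < y := lt_of_le_of_ne (not_lt.mp hgt) (hne k)
      have hsub : (Finset.univ.filter (fun m : Fin n => B m < y)) ⊆
          (Finset.univ.filter (fun m : Fin n => k ≤ m)) ∪
            (Finset.univ.filter (fun m : Fin n => B k < B m ∧ B m < y)) := by
        intro m hm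
        simp only [Finset.mem_filter, Finset.mem_union, Finset.mem_univ, true_and] at hm ⊢
        rcases le_or_gt k m with h | h
        · exact Or.inl h
        · exact Or.inr ⟨hBanti h, hm⟩
      have h1 : (Finset.univ.filter (fun m : Fin n => k ≤ m)).card = n - (k : ℕ) := by
        have he : Finset.univ.filter (fun m : Fin n => k ≤ m) = Finset.Ici k := by
          ext m; simp
        rw [he, Fin.card_Ici]
      have h2 : (Finset.univ.filter (fun m : Fin n => B k < B m ∧ B m < y)).card
          ≤ y - B k - 1 := by
        apply hinj
        intro m hm
        simpa using (Finset.mem_filter.1 hm).2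
      have hcb : c ≤ (n - (k : ℕ)) + (y - B k - 1) := by
        calc c ≤ _ := Finset.card_le_card hsub
          _ ≤ _ := Finset.card_union_le _ _
          _ ≤ (n - (k : ℕ)) + (y - B k - 1) := by rw [h1]; exact Nat.add_le_add_left h2 _
      omega
    · intro hyk
      have hsub : (Finset.univ.filter (fun m : Fin n => k < m)) ⊆
          (Finset.univ.filter (fun m : Fin n => B m < y)) ∪
            (Finset.univ.filter (fun m : Fin n => y < B m ∧ B m < B k)) := by
        intro m hm
        simp only [Finset.mem_filter, Finset.mem_union, Finset.mem_univ, true_and] at hm ⊢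
        rcases lt_trichotomy (B m) y with h | h | h
        · exact Or.inl h
        · exact absurd h (hne m)
        · exact Or.inr ⟨h, hBanti hm⟩
      have h1 : (Finset.univ.filter (fun m : Fin n => k < m)).card = n - 1 - (k : ℕ) := by
        have he : Finset.univ.filter (fun m : Fin n => k < m) = Finset.Ioi k := by
          ext m; simp
        rw [he, Fin.card_Ioi]
      have h2 : (Finset.univ.filter (fun m : Fin n => y < B m ∧ B m < B k)).card
          ≤ B k - y - 1 := by
        apply hinj
        intro m hm
        simpa using (Finset.mem_filter.1 hm).2
      have hcb : n - 1 - (k : ℕ) ≤ c + (B k - y - 1) := by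
        calc n - 1 - (k : ℕ) = _ := h1.symm
          _ ≤ _ := Finset.card_le_card hsub
          _ ≤ _ := Finset.card_union_le _ _
          _ ≤ c + (B k - y - 1) := Nat.add_le_add_left h2 _
      omega
  have hcol : colLen lam (y - c) = n - c := by
    rw [colLen_eq]
    have he : (Finset.univ.filter (fun k : Fin n => (y - c) < rowLen lam (k : ℕ)))
        = Finset.univ.filter (fun k : Fin n => y < B k) := by
      ext k
      simp only [Finset.mem_filter, Finset.mem_univ, true_and]
      exact hclaimA k
    rw [he]
    have hpart := Finset.card_filter_add_card_filter_not
      (s := Finset.univ) (p := fun k : Fin n => B k < y)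
    have he2 : (Finset.univ.filter (fun k : Fin n => ¬ (B k < y)))
        = Finset.univ.filter (fun k : Fin n => y < B k) := by
      ext k
      simp only [Finset.mem_filter, Finset.mem_univ, true_and, not_lt]
      exact ⟨fun h => lt_of_le_of_ne h (Ne.symm (hne k)), fun h => le_of_lt h⟩
    rw [he2] at hpart
    have hcu : (Finset.univ : Finset (Fin n)).card = n := by simp
    omega
  have hci : c ≤ n - 1 - (i : ℕ) := by
    have hsub : (Finset.univ.filter (fun k : Fin n => B k < y)) ⊆
        Finset.Ioi i := by
      intro m hm
      simp only [Finset.mem_filter, Finset.mem_univ, true_and] at hm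
      exact Finset.mem_Ioi.2 (hBlt (by omega))
    calc c ≤ (Finset.Ioi i).card := Finset.card_le_card hsub
      _ = n - 1 - (i : ℕ) := Fin.card_Ioi i
  have hji : y - c < rowLen lam (i : ℕ) := (hclaimA i).2 (by omega)
  have hin : (i : ℕ) < n := i.isLt
  have hhook : hookLen lam (i : ℕ) (y - c) = t := by
    unfold hookLen
    omega
  exact hcore (i : ℕ) (y - c) hji (hhook ▸ dvd_refl t)


lemma rename_delta {n : ℕ} (a b : Fin n) (hab : a ≠ b) :
    rename (Equiv.swap a b)
      (∏ i : Fin n, ∏ j ∈ Finset.univ.filter (fun j : Fin n => (i : ℕ) < (j : ℕ)),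
        (X i - X j : MvPolynomial (Fin n) ℤ))
    = - ∏ i : Fin n, ∏ j ∈ Finset.univ.filter (fun j : Fin n => (i : ℕ) < (j : ℕ)),
        (X i - X j) := by
  classical
  have hIoi : ∀ i : Fin n,
      Finset.univ.filter (fun j : Fin n => (i : ℕ) < (j : ℕ)) = Finset.Ioi i := by
    intro i; ext j; simp only [Finset.mem_filter, Finset.mem_Ioi, Finset.mem_univ, true_and, Fin.lt_def]
  set V : MvPolynomial (Fin n) ℤ :=
    (Matrix.vandermonde (fun i : Fin n => (X i : MvPolynomial (Fin n) ℤ))).det with hV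
  set K : ℕ := ∑ i : Fin n, (Finset.Ioi i).card with hK
  have hD : (∏ i : Fin n, ∏ j ∈ Finset.univ.filter (fun j : Fin n => (i : ℕ) < (j : ℕ)),
      (X i - X j : MvPolynomial (Fin n) ℤ)) = (-1) ^ K * V := by
    simp only [hIoi]
    rw [hV, Matrix.det_vandermonde]
    calc (∏ i : Fin n, ∏ j ∈ Finset.Ioi i, (X i - X j : MvPolynomial (Fin n) ℤ))
        = ∏ i : Fin n, ((-1) ^ (Finset.Ioi i).card *
            ∏ j ∈ Finset.Ioi i, (X j - X i : MvPolynomial (Fin n) ℤ)) := by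
          apply Finset.prod_congr rfl
          intro i _
          rw [← Finset.prod_const (-1 : MvPolynomial (Fin n) ℤ), ← Finset.prod_mul_distrib]
          exact Finset.prod_congr rfl fun j _ => by ring
      _ = (∏ i : Fin n, ((-1 : MvPolynomial (Fin n) ℤ)) ^ (Finset.Ioi i).card) *
            ∏ i : Fin n, ∏ j ∈ Finset.Ioi i, (X j - X i) := Finset.prod_mul_distrib
      _ = (-1) ^ K * ∏ i : Fin n, ∏ j ∈ Finset.Ioi i, (X j - X i) := by
          rw [Finset.prod_pow_eq_pow_sum]
  have hVswap : rename (Equiv.swap a b) V = -V := by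
    set f : MvPolynomial (Fin n) ℤ →+* MvPolynomial (Fin n) ℤ :=
      (rename (Equiv.swap a b) : MvPolynomial (Fin n) ℤ →ₐ[ℤ] MvPolynomial (Fin n) ℤ).toRingHom
      with hf
    have h0 : rename (Equiv.swap a b) V = f V := rfl
    rw [h0, hV, RingHom.map_det]
    have h2 : f.mapMatrix (Matrix.vandermonde fun i : Fin n => (X i : MvPolynomial (Fin n) ℤ))
        = ((Matrix.vandermonde fun i : Fin n => (X i : MvPolynomial (Fin n) ℤ)).submatrix
            (Equiv.swap a b) id) := by
      ext i j
      simp [Matrix.vandermonde_apply, RingHom.mapMatrix_apply, Matrix.map_apply,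
        Matrix.submatrix_apply, map_pow, hf]
    rw [h2, Matrix.det_permute]
    simp [Equiv.Perm.sign_swap hab]
  rw [hD, map_mul, map_pow, map_neg, map_one, hVswap]
  ring


lemma rename_psum {n : ℕ} (σ : Equiv.Perm (Fin n)) (m : ℕ) :
    rename σ (∑ i : Fin n, (X i : MvPolynomial (Fin n) ℤ) ^ m) = ∑ i : Fin n, X i ^ m := by
  rw [map_sum]
  simp only [map_pow, rename_X]
  exact Equiv.sum_comp σ (fun i => X i ^ m)

lemma rename_psum_prod {n : ℕ} (σ : Equiv.Perm (Fin n)) (s : Multiset ℕ) :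
    rename σ ((s.map (fun m => ∑ i : Fin n, (X i : MvPolynomial (Fin n) ℤ) ^ m)).prod)
      = (s.map (fun m => ∑ i : Fin n, (X i : MvPolynomial (Fin n) ℤ) ^ m)).prod := by
  rw [map_multiset_prod]
  congr 1
  rw [Multiset.map_map]
  exact Multiset.map_congr rfl fun m _ => rename_psum σ m

lemma coeff_antisym_zero {n : ℕ} (G : MvPolynomial (Fin n) ℤ) (a b : Fin n)
    (hG : rename (Equiv.swap a b) G = -G) (e : Fin n →₀ ℕ) (he : e a = e b) :
    MvPolynomial.coeff e G = 0 := by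
  have h1 : Finsupp.mapDomain (Equiv.swap a b) e = e := by
    ext x
    obtain ⟨y, rfl⟩ := (Equiv.swap a b).surjective x
    rw [Finsupp.mapDomain_apply (Equiv.injective _)]
    rcases eq_or_ne y a with rfl | hya
    · rw [Equiv.swap_apply_left, he]
    rcases eq_or_ne y b with rfl | hyb
    · rw [Equiv.swap_apply_right, he]
    · rw [Equiv.swap_apply_of_ne_of_ne hya hyb]
  have h2 := MvPolynomial.coeff_rename_mapDomain (Equiv.swap a b)
    (Equiv.injective _) G e
  rw [h1, hG, MvPolynomial.coeff_neg] at h2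
  linarith

end AuxCore

open MvPolynomial in
/-- If `μ` has a part of size `t` and `λ` is a `t`-core (no hook length divisible by `t`),
then `χ^λ_μ = 0`. -/
theorem char_eq_zero_of_core (n t : ℕ) (ht : 0 < t) (lam mu : Nat.Partition n)
    (hpart : t ∈ mu.parts)
    (hcore : ∀ i j, j < rowLen lam i → ¬ t ∣ hookLen lam i j) :
    charSn n lam mu = 0 := by
  classical
  set B : Fin n → ℕ := fun i : Fin n => rowLen lam (i : ℕ) + (n - 1 - (i : ℕ)) with hB
  set d0 : Fin n →₀ ℕ := Finsupp.equivFunOnFinite.symm B with hd0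
  have hd0app : ∀ k : Fin n, d0 k = B k := fun k =>
    Finsupp.equivFunOnFinite_symm_apply_apply B k
  have hmain : charSn n lam mu = MvPolynomial.coeff d0
      ((∏ i : Fin n, ∏ j ∈ Finset.univ.filter (fun j : Fin n => (i : ℕ) < (j : ℕ)),
          (X i - X j : MvPolynomial (Fin n) ℤ)) *
        (mu.parts.map (fun m => ∑ i : Fin n, (X i : MvPolynomial (Fin n) ℤ) ^ m)).prod) := rfl
  rw [hmain]
  have hparts : mu.parts = t ::ₘ mu.parts.erase t := (Multiset.cons_erase hpart).symm
  rw [hparts, Multiset.map_cons, Multiset.prod_cons]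
  set Δ : MvPolynomial (Fin n) ℤ :=
    ∏ i : Fin n, ∏ j ∈ Finset.univ.filter (fun j : Fin n => (i : ℕ) < (j : ℕ)),
      (X i - X j) with hΔ
  set Q : MvPolynomial (Fin n) ℤ :=
    ((mu.parts.erase t).map (fun m => ∑ i : Fin n, (X i : MvPolynomial (Fin n) ℤ) ^ m)).prod
    with hQ
  have hre : Δ * ((∑ i : Fin n, (X i : MvPolynomial (Fin n) ℤ) ^ t) * Q)
      = ∑ i : Fin n, (X i ^ t * (Δ * Q)) := by
    rw [show Δ * ((∑ i : Fin n, (X i : MvPolynomial (Fin n) ℤ) ^ t) * Q)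
        = (∑ i : Fin n, (X i : MvPolynomial (Fin n) ℤ) ^ t) * (Δ * Q) from by ring,
      Finset.sum_mul]
  rw [hre, MvPolynomial.coeff_sum]
  apply Finset.sum_eq_zero
  intro i _
  rw [MvPolynomial.X_pow_eq_monomial, MvPolynomial.coeff_monomial_mul']
  split_ifs with h
  · rw [one_mul]
    have hti : t ≤ B i := by
      have h' := Finsupp.single_le_iff.1 h
      rwa [hd0app] at h'
    obtain ⟨j, hj⟩ := beta_closed ht lam hcore i hti
    have hj' : B j + t = B i := hj
    have hij : i ≠ j := by
      intro hh
      rw [hh] at hj'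
      omega
    apply coeff_antisym_zero (Δ * Q) i j
    · rw [map_mul, rename_delta i j hij, hQ, rename_psum_prod]
      ring
    · have h1 : (d0 - Finsupp.single i t) i = B i - t := by
        rw [Finsupp.tsub_apply, hd0app, Finsupp.single_eq_same]
      have h2 : (d0 - Finsupp.single i t) j = B j := by
        rw [Finsupp.tsub_apply, hd0app, Finsupp.single_eq_of_ne' hij]
        omega
      omega
  · rfl
end

section
/- A Young diagram has a removable border strip of length t if and only if it has a box of hook length t. Equivalently, for any partition λ and positive integer t, λ has a hook of length divisible by t if and only if one can remove a border strip of length t from λ. -/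
open scoped BigOperators

/-- `λ` has a removable border strip of length `t`: there is a smaller Young diagram `g`
contained in `λ` (given by its row lengths) such that the skew shape `λ/g` has `t` boxes,
its nonempty rows form a consecutive interval `[a,b]`, and consecutive nonempty rows overlap
in exactly one column (equivalently, the skew shape is connected and contains no `2×2`
square). -/
def HasBorderStrip {n : ℕ} (lam : Nat.Partition n) (t : ℕ) : Prop :=
  ∃ g : ℕ → ℕ,
    (∀ i, g (i + 1) ≤ g i) ∧
    (∀ i, g i ≤ rowLen lam i) ∧
    (∑ i ∈ Finset.range (n + 1), (rowLen lam i - g i)) = t ∧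
    ∃ a b : ℕ, a ≤ b ∧
      (∀ i, g i < rowLen lam i ↔ a ≤ i ∧ i ≤ b) ∧
      (∀ i, a ≤ i → i < b → g i = rowLen lam (i + 1) - 1)

lemma getD_lt_iff_filter (j : ℕ) : ∀ (l : List ℕ), l.Pairwise (fun a b => b ≤ a) →
    ∀ i, j < l.getD i 0 ↔ i < (l.filter (fun a => j < a)).length := by
  intro l
  induction l with
  | nil => intro _ i; simp
  | cons x xs ih =>
    intro hp i
    rw [List.pairwise_cons] at hp
    obtain ⟨hx, hxs⟩ := hp
    have hfilt : ¬ j < x → (xs.filter (fun a => j < a)).length = 0 := by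
      intro h
      simp only [List.length_eq_zero_iff, List.filter_eq_nil_iff, decide_eq_true_eq]
      intro a ha
      exact fun hja => h (lt_of_lt_of_le hja (hx a ha))
    cases i with
    | zero =>
      by_cases h : j < x
      · simp [h, List.filter_cons]
      · simp [h, List.filter_cons, hfilt h]
    | succ i =>
      have hthis := ih hxs i
      by_cases h : j < x
      · simpa [h, List.filter_cons, List.getD] using hthis
      · rw [show (x :: xs).getD (i+1) 0 = xs.getD i 0 from rfl, hthis]
        simp [List.filter_cons, h, hfilt h]

lemma rowLen_lt_iff {n : ℕ} (μ : Nat.Partition n) (i j : ℕ) :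
    j < rowLen μ i ↔ i < colLen μ j := by
  have hs : (μ.parts.sort (· ≤ ·)).reverse.Pairwise (fun a b => b ≤ a) := by
    rw [List.pairwise_reverse]
    exact μ.parts.pairwise_sort (· ≤ ·)
  rw [rowLen, getD_lt_iff_filter j _ hs i, colLen]
  have h2 : μ.parts.filter (fun a => j < a)
      = ((μ.parts.sort (· ≤ ·)).filter (fun a => j < a) : List ℕ) := by
    conv_lhs => rw [← μ.parts.sort_eq (· ≤ ·)]
    rfl
  rw [h2]
  simp [List.filter_reverse]

lemma rowLen_anti_s2 {n : ℕ} (μ : Nat.Partition n) : ∀ {p q : ℕ}, p ≤ q → rowLen μ q ≤ rowLen μ p := by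
  have step : ∀ i, rowLen μ (i+1) ≤ rowLen μ i := by
    intro i
    by_contra h
    push_neg at h
    have h1 := (rowLen_lt_iff μ (i+1) (rowLen μ i)).mp h
    have h2 := (rowLen_lt_iff μ i (rowLen μ i)).mpr (by omega)
    omega
  intro p q h
  exact antitone_nat_of_succ_le step h

lemma colLen_le_n {n : ℕ} (μ : Nat.Partition n) (j : ℕ) : colLen μ j ≤ n := by
  have h1 : colLen μ j ≤ Multiset.card μ.parts :=
    Multiset.card_le_card (Multiset.filter_le _ _)
  have h2 : Multiset.card μ.parts • 1 ≤ μ.parts.sum :=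
    Multiset.card_nsmul_le_sum (fun x hx => μ.parts_pos hx)
  have h3 := μ.parts_sum
  simp only [smul_eq_mul, mul_one] at h2
  omega

/-- Telescoping sum for a border strip. -/
lemma tele_sum (f : ℕ → ℕ) : ∀ (d a : ℕ), (∀ k, a ≤ k → k < a + d → f (k+1) ≤ f k ∧ 1 ≤ f (k+1)) →
    (∑ k ∈ Finset.Ico a (a+d), (f k - (f (k+1) - 1))) + f (a+d) = f a + d := by
  intro d
  induction d with
  | zero => intro a _; simp
  | succ d ih =>
    intro a h
    rw [show a + (d+1) = (a+d)+1 from rfl, Finset.sum_Ico_succ_top (by omega)]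
    have hd := h (a+d) (by omega) (by omega)
    have hih := ih a (fun k hk hk' => h k hk (by omega))
    omega

lemma strip_of_hook {n : ℕ} (lam : Nat.Partition n) (t : ℕ) (ht : 0 < t) :
    (∃ i j, j < rowLen lam i ∧ hookLen lam i j = t) → HasBorderStrip lam t := by
  rintro ⟨i, j, hj, hh⟩
  have hic : i < colLen lam j := (rowLen_lt_iff lam i j).mp hj
  have hcn : colLen lam j ≤ n := colLen_le_n lam j
  set c := colLen lam j with hc
  set b := c - 1 with hb
  have hib : i ≤ b := by omega
  have hrow : ∀ k, (j < rowLen lam k ↔ k < c) := fun k => rowLen_lt_iff lam k j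
  set g : ℕ → ℕ := fun k =>
    if k < i then rowLen lam k else if k < b then rowLen lam (k+1) - 1
    else if k = b then j else rowLen lam k with hg
  have hgval_lo : ∀ k, k < i → g k = rowLen lam k := by intro k hk; simp [hg, hk]
  have hgval_mid : ∀ k, i ≤ k → k < b → g k = rowLen lam (k+1) - 1 := by
    intro k h1 h2; simp [hg, h2, Nat.not_lt.mpr h1]
  have hgval_b : g b = j := by simp [hg, Nat.not_lt.mpr hib]
  have hgval_hi : ∀ k, b < k → g k = rowLen lam k := by
    intro k hk
    show (if k < i then rowLen lam k else if k < b then rowLen lam (k+1) - 1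
      else if k = b then j else rowLen lam k) = rowLen lam k
    rw [if_neg (by omega), if_neg (by omega), if_neg (by omega)]
  have hjb : j < rowLen lam b := (hrow b).mpr (by omega)
  have hgle : ∀ k, g k ≤ rowLen lam k := by
    intro k
    rcases lt_trichotomy k b with h | h | h
    · rcases Nat.lt_or_ge k i with h2 | h2
      · rw [hgval_lo k h2]
      · rw [hgval_mid k h2 h]
        have : rowLen lam (k+1) ≤ rowLen lam k := rowLen_anti_s2 lam (by omega)
        omega
    · subst h; rw [hgval_b]; omega
    · rw [hgval_hi k h]
  have hmono : ∀ k, g (k+1) ≤ g k := by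
    intro k
    rcases Nat.lt_or_ge k i with h2 | h2
    · rw [hgval_lo k h2]
      exact le_trans (hgle (k+1)) (rowLen_anti_s2 lam (by omega))
    · rcases lt_trichotomy k b with h | h | h
      · rw [hgval_mid k h2 h]
        rcases lt_trichotomy (k+1) b with h3 | h3 | h3
        · rw [hgval_mid (k+1) (by omega) h3]
          have : rowLen lam (k+1+1) ≤ rowLen lam (k+1) := rowLen_anti_s2 lam (by omega)
          omega
        · rw [h3, hgval_b]; omega
        · omega
      · subst h
        rw [hgval_b, hgval_hi (b+1) (by omega)]
        have : ¬ j < rowLen lam (b+1) := by rw [hrow]; omega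
        omega
      · rw [hgval_hi k h, hgval_hi (k+1) (by omega)]
        exact rowLen_anti_s2 lam (by omega : k ≤ k + 1)
  refine ⟨g, hmono, hgle, ?_, i, b, hib, ?_, hgval_mid⟩
  · -- the sum
    have hsub : Finset.Icc i b ⊆ Finset.range (n+1) := by
      intro x hx
      simp only [Finset.mem_Icc] at hx
      simp only [Finset.mem_range]
      omega
    have hzero : ∀ x ∈ Finset.range (n+1), x ∉ Finset.Icc i b → rowLen lam x - g x = 0 := by
      intro x _ hx
      simp only [Finset.mem_Icc, not_and, Nat.not_le] at hx
      rcases Nat.lt_or_ge x i with h2 | h2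
      · rw [hgval_lo x h2]; omega
      · rw [hgval_hi x (hx h2)]; omega
    rw [← Finset.sum_subset hsub hzero]
    rw [← Finset.Ico_add_one_right_eq_Icc, Finset.sum_Ico_succ_top hib]
    have hcong : ∑ k ∈ Finset.Ico i b, (rowLen lam k - g k)
        = ∑ k ∈ Finset.Ico i b, (rowLen lam k - (rowLen lam (k+1) - 1)) := by
      refine Finset.sum_congr rfl ?_
      intro k hk
      simp only [Finset.mem_Ico] at hk
      rw [hgval_mid k hk.1 hk.2]
    rw [hcong]
    have htele := tele_sum (rowLen lam) (b - i) i ?_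
    · rw [show i + (b - i) = b by omega] at htele
      rw [hgval_b]
      have hhl : hookLen lam i j = t := hh
      unfold hookLen at hhl
      rw [← hc] at hhl
      omega
    · intro k hk1 hk2
      constructor
      · exact rowLen_anti_s2 lam (by omega)
      · have : j < rowLen lam (k+1) := (hrow (k+1)).mpr (by omega)
        omega
  · -- the iff
    intro k
    rcases Nat.lt_or_ge k i with h2 | h2
    · rw [hgval_lo k h2]; omega
    · rcases lt_trichotomy k b with h | h | h
      · rw [hgval_mid k h2 h]
        have h1 : j < rowLen lam (k+1) := (hrow (k+1)).mpr (by omega)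
        have h3 : rowLen lam (k+1) ≤ rowLen lam k := rowLen_anti_s2 lam (by omega)
        omega
      · subst h; rw [hgval_b]; omega
      · rw [hgval_hi k h]; omega

lemma hook_of_strip {n : ℕ} (lam : Nat.Partition n) (t : ℕ) :
    HasBorderStrip lam t → (∃ i j, j < rowLen lam i ∧ hookLen lam i j = t) := by
  rintro ⟨g, hmono, hgle, hsum, a, b, hab, hiff, hmid⟩
  have hganti : ∀ {p q : ℕ}, p ≤ q → g q ≤ g p := fun h => antitone_nat_of_succ_le hmono h
  have hgb : g b < rowLen lam b := (hiff b).mpr ⟨hab, le_refl b⟩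
  set j := g b with hj
  have hja : j < rowLen lam a := lt_of_le_of_lt (hganti hab) ((hiff a).mpr ⟨le_refl a, hab⟩)
  have hbc : b < colLen lam j := (rowLen_lt_iff lam b j).mp hgb
  have hgb1 : g (b+1) = rowLen lam (b+1) := by
    have h1 : ¬ g (b+1) < rowLen lam (b+1) := by rw [hiff]; omega
    have := hgle (b+1)
    omega
  have hcb1 : ¬ (b + 1 < colLen lam j) := by
    rw [← rowLen_lt_iff]
    have := hmono b
    omega
  have hcol : colLen lam j = b + 1 := by omega
  have hbn : b < n := by
    have h1 : 0 < rowLen lam b := by omega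
    have h2 := (rowLen_lt_iff lam b 0).mp h1
    have h3 := colLen_le_n lam 0
    omega
  have hrpos : ∀ k, a ≤ k → k ≤ b → 0 < rowLen lam k := by
    intro k h1 h2
    have := (hiff k).mpr ⟨h1, h2⟩
    omega
  refine ⟨a, j, hja, ?_⟩
  -- compute the sum
  have hsub : Finset.Icc a b ⊆ Finset.range (n+1) := by
    intro x hx
    simp only [Finset.mem_Icc] at hx
    simp only [Finset.mem_range]
    omega
  have hzero : ∀ x ∈ Finset.range (n+1), x ∉ Finset.Icc a b → rowLen lam x - g x = 0 := by
    intro x _ hx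
    simp only [Finset.mem_Icc, not_and, Nat.not_le] at hx
    have h1 : ¬ g x < rowLen lam x := by rw [hiff]; omega
    omega
  rw [← Finset.sum_subset hsub hzero] at hsum
  rw [← Finset.Ico_add_one_right_eq_Icc, Finset.sum_Ico_succ_top hab] at hsum
  have hcong : ∑ k ∈ Finset.Ico a b, (rowLen lam k - g k)
      = ∑ k ∈ Finset.Ico a b, (rowLen lam k - (rowLen lam (k+1) - 1)) := by
    refine Finset.sum_congr rfl ?_
    intro k hk
    simp only [Finset.mem_Ico] at hk
    rw [hmid k hk.1 hk.2]
  rw [hcong] at hsum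
  have htele := tele_sum (rowLen lam) (b - a) a ?_
  · rw [show a + (b - a) = b by omega] at htele
    unfold hookLen
    rw [hcol]
    omega
  · intro k hk1 hk2
    exact ⟨rowLen_anti_s2 lam (by omega), hrpos (k+1) (by omega) (by omega)⟩

lemma gap_step (B : ℕ → Prop) (t : ℕ) (ht : 0 < t) :
    ∀ (k x : ℕ), B x → k * t ≤ x → ¬ B (x - k * t) → ∃ x', B x' ∧ t ≤ x' ∧ ¬ B (x' - t) := by
  intro k
  induction k with
  | zero => intro x hB _ h2; simp at h2; exact absurd hB h2
  | succ k ih =>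
    intro x hB hle hnb
    have hmul : (k + 1) * t = k * t + t := by rw [Nat.succ_mul]
    by_cases h : B (x - t)
    · refine ih (x - t) h (by omega) ?_
      rw [show x - t - k * t = x - (k+1) * t by omega]
      exact hnb
    · exact ⟨x, hB, by omega, h⟩

lemma hook_iff_gap {n : ℕ} (lam : Nat.Partition n) (m : ℕ) (hm : 0 < m) :
    (∃ i j, j < rowLen lam i ∧ hookLen lam i j = m) ↔
    ∃ x, (∃ i, i ≤ n ∧ rowLen lam i + (n - i) = x) ∧ m ≤ x ∧
      ¬ (∃ i, i ≤ n ∧ rowLen lam i + (n - i) = x - m) := by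
  constructor
  · rintro ⟨i, j, hj, hh⟩
    have hic : i < colLen lam j := (rowLen_lt_iff lam i j).mp hj
    have hcn : colLen lam j ≤ n := colLen_le_n lam j
    unfold hookLen at hh
    refine ⟨rowLen lam i + (n - i), ⟨i, by omega, rfl⟩, by omega, ?_⟩
    rintro ⟨k, hk, hbe⟩
    by_cases hkc : k < colLen lam j
    · have h1 : j < rowLen lam k := (rowLen_lt_iff lam k j).mpr hkc
      omega
    · have h1 : ¬ j < rowLen lam k := by rw [rowLen_lt_iff]; exact hkc
      omega
  · rintro ⟨x, ⟨k, hk, hbx⟩, hmx, hnb⟩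
    set y := x - m with hy
    clear_value y
    have hPy : y + colLen lam y ≤ y + n + 1 := by have := colLen_le_n lam y; omega
    have hEx : ∃ j, y + colLen lam j ≤ j + n + 1 := ⟨y, hPy⟩
    set j₀ := Nat.find hEx with hj₀def
    have h₀ : y + colLen lam j₀ ≤ j₀ + n + 1 := Nat.find_spec hEx
    have hjy : j₀ ≤ y := Nat.find_min' hEx hPy
    clear_value j₀
    have heq : y + colLen lam j₀ = j₀ + n + 1 := by
      rcases Nat.eq_zero_or_pos j₀ with h | h
      · -- j₀ = 0 : otherwise y is a bead
        rw [h] at h₀ ⊢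
        by_contra hcon
        have hylt : y + colLen lam 0 ≤ n := by omega
        exact hnb ⟨n - y, by omega, by
          have h2 : ¬ (0 < rowLen lam (n - y)) := by
            rw [rowLen_lt_iff]; omega
          omega⟩
      · have hprev : ¬ (y + colLen lam (j₀ - 1) ≤ (j₀ - 1) + n + 1) :=
          Nat.find_min hEx (by omega)
        push_neg at hprev
        by_contra hcon
        set d := (j₀ - 1) + n + 1 - y with hd
        clear_value d
        have hd1 : d < colLen lam (j₀ - 1) := by omega
        have hd2 : colLen lam j₀ ≤ d := by omega
        have hr1 : (j₀ - 1) < rowLen lam d := (rowLen_lt_iff lam d (j₀ - 1)).mpr hd1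
        have hr2 : ¬ ((j₀ - 1) + 1 < rowLen lam d) := by
          rw [rowLen_lt_iff, show (j₀ - 1) + 1 = j₀ by omega]
          omega
        refine hnb ⟨d, ?_, ?_⟩
        · have := colLen_le_n lam (j₀ - 1); omega
        · omega
    have hjrow : j₀ < rowLen lam k := by
      by_contra hcon
      have h1 : ¬ (k < colLen lam j₀) := by rw [← rowLen_lt_iff]; exact hcon
      omega
    refine ⟨k, j₀, hjrow, ?_⟩
    have hkc : k < colLen lam j₀ := (rowLen_lt_iff lam k j₀).mp hjrow
    unfold hookLen
    have := colLen_le_n lam j₀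
    omega

/-- A Young diagram has a removable border strip of length `t` iff it has a box of hook
length `t`; equivalently, it has a hook length divisible by `t` iff a border strip of
length `t` can be removed. -/
theorem borderStrip_iff_hook (n t : ℕ) (ht : 0 < t) (lam : Nat.Partition n) :
    ((∃ i j, j < rowLen lam i ∧ hookLen lam i j = t) ↔ HasBorderStrip lam t) ∧
    ((∃ i j, j < rowLen lam i ∧ t ∣ hookLen lam i j) ↔ HasBorderStrip lam t) := by
  constructor
  · exact ⟨strip_of_hook lam t ht, hook_of_strip lam t⟩
  constructor
  · rintro ⟨i, j, hj, hdvd⟩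
    have hic : i < colLen lam j := (rowLen_lt_iff lam i j).mp hj
    have hpos : 0 < hookLen lam i j := by unfold hookLen; omega
    obtain ⟨k, hk⟩ := hdvd
    have hkpos : 0 < k := by
      rcases Nat.eq_zero_or_pos k with h | h
      · rw [h, Nat.mul_zero] at hk; omega
      · exact h
    obtain ⟨x, hbx, hmx, hnb⟩ := (hook_iff_gap lam (hookLen lam i j) hpos).mp ⟨i, j, hj, rfl⟩
    rw [hk] at hmx hnb
    obtain ⟨x', hbx', htx', hnb'⟩ :=
      gap_step (fun z => ∃ i, i ≤ n ∧ rowLen lam i + (n - i) = z) t ht k x hbx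
        (by rw [Nat.mul_comm]; exact hmx) (by rw [Nat.mul_comm]; exact hnb)
    exact strip_of_hook lam t ht ((hook_iff_gap lam t ht).mpr ⟨x', hbx', htx', hnb'⟩)
  · intro hbs
    obtain ⟨i, j, hj, hh⟩ := hook_of_strip lam t hbs
    exact ⟨i, j, hj, hh ▸ dvd_refl t⟩
end

section
/- Let p be a prime, μ a partition of n, and μ̃ the partition obtained from μ by repeatedly merging p equal parts of size m into one part of size pm until no part occurs p or more times. Then for every partition λ of n, χ^λ_μ ≡ χ^λ_{μ̃} (mod p). In particular, if χ^λ_{μ̃} = 0 then p divides χ^λ_μ. -/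
open scoped BigOperators

def MergeStep (p : ℕ) (s t : Multiset ℕ) : Prop :=
  ∃ m : ℕ, 0 < m ∧ Multiset.replicate p m ≤ s ∧
    t = (s - Multiset.replicate p m) + {p * m}

def Reduced (p : ℕ) (s : Multiset ℕ) : Prop := ∀ m : ℕ, s.count m ≤ p - 1

private lemma psum_pow_char {n p : ℕ} (hp : p.Prime) (m : ℕ) :
    (∑ i : Fin n, MvPolynomial.X i ^ m : MvPolynomial (Fin n) (ZMod p)) ^ p
      = ∑ i : Fin n, MvPolynomial.X i ^ (p * m) := by
  haveI : Fact p.Prime := ⟨hp⟩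
  rw [sum_pow_char]
  congr 1
  ext i
  rw [← pow_mul, Nat.mul_comm]

private lemma prod_eq_of_merge {n p : ℕ} (hp : p.Prime) {s t : Multiset ℕ}
    (h : MergeStep p s t) :
    ((s.map (fun m => ∑ i : Fin n, MvPolynomial.X i ^ m :
        ℕ → MvPolynomial (Fin n) (ZMod p))).prod)
      = ((t.map (fun m => ∑ i : Fin n, MvPolynomial.X i ^ m)).prod) := by
  obtain ⟨m, -, hle, ht⟩ := h
  set g : ℕ → MvPolynomial (Fin n) (ZMod p) := fun m => ∑ i : Fin n, MvPolynomial.X i ^ m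
  have hs : s = (s - Multiset.replicate p m) + Multiset.replicate p m :=
    (tsub_add_cancel_of_le hle).symm
  have hL : (s.map g).prod = ((s - Multiset.replicate p m).map g).prod * g m ^ p := by
    conv_lhs => rw [hs]
    rw [Multiset.map_add, Multiset.prod_add, Multiset.map_replicate, Multiset.prod_replicate]
  rw [hL, ht, Multiset.map_add, Multiset.prod_add]
  congr 1
  have : ({p * m} : Multiset ℕ).map g = {g (p * m)} := by simp
  rw [this, Multiset.prod_singleton]
  exact psum_pow_char hp m

/-- If `μ̃` is obtained from `μ` by repeatedly merging `p` equal parts until no part occurs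
`p` or more times, then `χ^λ_μ ≡ χ^λ_{μ̃} (mod p)` for every `λ`; in particular, if
`χ^λ_{μ̃} = 0` then `p ∣ χ^λ_μ`. -/
theorem char_modEq_reduction (p n : ℕ) (hp : p.Prime) (μ ν : Nat.Partition n)
    (hreach : Relation.ReflTransGen (MergeStep p) μ.parts ν.parts)
    (hred : Reduced p ν.parts) :
    ∀ lam : Nat.Partition n,
      charSn n lam μ ≡ charSn n lam ν [ZMOD p] ∧
      (charSn n lam ν = 0 → (p : ℤ) ∣ charSn n lam μ) := by
  intro lam
  set f := Int.castRingHom (ZMod p)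
  have key : ∀ s t : Multiset ℕ, Relation.ReflTransGen (MergeStep p) s t →
      MvPolynomial.map f ((s.map (fun m => ∑ i : Fin n, MvPolynomial.X i ^ m :
          ℕ → MvPolynomial (Fin n) ℤ)).prod)
        = MvPolynomial.map f ((t.map (fun m => ∑ i : Fin n, MvPolynomial.X i ^ m)).prod) := by
    intro s t h
    induction h with
    | refl => rfl
    | tail _ hstep ih =>
      rw [ih]
      have e1 : ∀ u : Multiset ℕ,
          MvPolynomial.map f ((u.map (fun m => ∑ i : Fin n, MvPolynomial.X i ^ m :
            ℕ → MvPolynomial (Fin n) ℤ)).prod)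
          = (u.map (fun m => ∑ i : Fin n, MvPolynomial.X i ^ m :
              ℕ → MvPolynomial (Fin n) (ZMod p))).prod := by
        intro u
        rw [map_multiset_prod, Multiset.map_map]
        congr 1
        ext m
        simp
      rw [e1, e1]
      exact prod_eq_of_merge hp hstep
  have hmain : charSn n lam μ ≡ charSn n lam ν [ZMOD p] := by
    rw [← ZMod.intCast_eq_intCast_iff]
    unfold charSn
    have := key μ.parts ν.parts hreach
    have hcg : ∀ P : MvPolynomial (Fin n) ℤ,
        ((MvPolynomial.coeff
          (Finsupp.equivFunOnFinite.symm fun i : Fin n =>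
            ((lam.parts.sort (· ≤ ·)).reverse.getD i 0) + (n - 1 - (i : ℕ))) P : ℤ) : ZMod p)
        = MvPolynomial.coeff
          (Finsupp.equivFunOnFinite.symm fun i : Fin n =>
            ((lam.parts.sort (· ≤ ·)).reverse.getD i 0) + (n - 1 - (i : ℕ)))
          (MvPolynomial.map f P) := by
      intro P
      rw [MvPolynomial.coeff_map]
      rfl
    rw [hcg, hcg, map_mul, map_mul, this]
  refine ⟨hmain, fun h0 => ?_⟩
  have := hmain
  rw [h0] at this
  exact Int.modEq_zero_iff_dvd.mp this
end

section
/- For every real r ∈ [0,1), there exists k ∈ {1, 3, 5} such that the fractional part {r − log₂ k} is at most log₂((1/log 2 − 1/100)/(1 + 1/100)). -/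
open Real

/-- For every `r ∈ [0,1)` there is `k ∈ {1,3,5}` with fractional part
`{r - log₂ k} ≤ log₂((1/log 2 - 1/100)/(1 + 1/100))`. -/
theorem fract_le_for_some_k (r : ℝ) (h0 : 0 ≤ r) (h1 : r < 1) :
    ∃ k ∈ ({1, 3, 5} : Finset ℕ),
      Int.fract (r - Real.logb 2 k) ≤
        Real.logb 2 ((1 / Real.log 2 - 1 / 100) / (1 + 1 / 100)) := by
  set c := Real.logb 2 ((1 / Real.log 2 - 1 / 100) / (1 + 1 / 100)) with hcdef
  have hb1 : (1:ℝ) < 2 := one_lt_two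
  set a := Real.logb 2 3 with hadef
  set b := Real.logb 2 5 with hbdef
  have h2 : Real.logb 2 2 = 1 := Real.logb_self_eq_one hb1
  have h4 : Real.logb 2 4 = 2 := by
    rw [show (4:ℝ) = 2^(2:ℕ) by norm_num, Real.logb_pow, h2]; norm_num
  have ha1 : 1 ≤ a := by
    rw [← h2, hadef]
    exact Real.logb_le_logb_of_le hb1 (by norm_num) (by norm_num)
  have hb2 : 2 ≤ b := by
    rw [← h4, hbdef]
    exact Real.logb_le_logb_of_le hb1 (by norm_num) (by norm_num)
  have hab4 : a + b ≤ 4 := by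
    have h15 : Real.logb 2 15 = a + b := by
      rw [show (15:ℝ) = 3 * 5 by norm_num, Real.logb_mul (by norm_num) (by norm_num)]
    have h16 : Real.logb 2 16 = 4 := by
      rw [show (16:ℝ) = 2^(4:ℕ) by norm_num, Real.logb_pow, h2]; norm_num
    rw [← h15, ← h16]
    exact Real.logb_le_logb_of_le hb1 (by norm_num) (by norm_num)
  have hab9 : 2 * a ≤ 1 + b := by
    have h9 : Real.logb 2 9 = 2 * a := by
      rw [show (9:ℝ) = 3^(2:ℕ) by norm_num, Real.logb_pow]; push_cast; ring
    have h10 : Real.logb 2 10 = 1 + b := by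
      rw [show (10:ℝ) = 2 * 5 by norm_num, Real.logb_mul (by norm_num) (by norm_num), h2]
    rw [← h9, ← h10]
    exact Real.logb_le_logb_of_le hb1 (by norm_num) (by norm_num)
  have hlog2 : 0 < Real.log 2 := Real.log_pos hb1
  have hlog2u : Real.log 2 < 0.6931471808 := Real.log_two_lt_d9
  have hc : 2 - a ≤ c := by
    have h43 : Real.logb 2 (4/3) = 2 - a := by
      rw [Real.logb_div (by norm_num) (by norm_num), h4, hadef]
    have harg : (4:ℝ)/3 ≤ (1 / Real.log 2 - 1 / 100) / (1 + 1 / 100) := by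
      rw [div_le_div_iff₀ (by norm_num) (by norm_num)]
      have : (407:ℝ)/300 ≤ 1 / Real.log 2 := by
        rw [le_div_iff₀ hlog2]; nlinarith
      nlinarith
    rw [← h43, hcdef]
    exact Real.logb_le_logb_of_le hb1 (by norm_num) harg
  by_cases hr1 : r ≤ c
  · refine ⟨1, by norm_num, ?_⟩
    have : Real.logb 2 (1:ℕ) = 0 := by norm_num
    rw [this, sub_zero, Int.fract_eq_self.2 ⟨h0, h1⟩]
    exact hr1
  push_neg at hr1
  by_cases hr2 : r ≤ a - 1
  · refine ⟨5, by norm_num, ?_⟩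
    have h5 : Real.logb 2 (5:ℕ) = b := by norm_num [hbdef]
    rw [h5]
    have hf : Int.fract (r - b) = r - b + 2 := by
      rw [show r - b = (r - b + 2) - ((2:ℤ):ℝ) by norm_num, Int.fract_sub_intCast,
        Int.fract_eq_self.2 ⟨by nlinarith, by nlinarith⟩]; push_cast; ring
    rw [hf]; nlinarith
  push_neg at hr2
  · refine ⟨3, by norm_num, ?_⟩
    have h3 : Real.logb 2 (3:ℕ) = a := by norm_num [hadef]
    rw [h3]
    have hf : Int.fract (r - a) = r - a + 1 := by
      rw [show r - a = (r - a + 1) - ((1:ℤ):ℝ) by norm_num, Int.fract_sub_intCast,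
        Int.fract_eq_self.2 ⟨by nlinarith, by nlinarith⟩]; push_cast; ring
    rw [hf]; nlinarith
end

section
/- Fix a prime p and an integer k coprime to p. The generating function identity Σ_{n≥0} (Σ_{μ ⊢ n} M_μ^{(k)}) x^n = P(x)·Σ_{j≥0} k·p^j·x^{k p^j}/(1 − x^{k p^j}) holds as an identity of formal power series, where P(x) = Π_{ℓ≥1} 1/(1−x^ℓ) is the generating function of the partition function and M_μ^{(k)} is the sum of the parts of μ of the form k·p^j. -/
open scoped BigOperators

/-- `M_s^{(k)}`: the sum of the parts of `s` of the form `k·p^j`. -/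
noncomputable def Msum (p k : ℕ) (s : Multiset ℕ) : ℕ :=
  letI := Classical.decPred fun a : ℕ => ∃ j : ℕ, a = k * p ^ j
  (s.filter fun a : ℕ => ∃ j : ℕ, a = k * p ^ j).sum

/-- `P(x) = Σ p(n) xⁿ`, the generating function of the partition function. -/
noncomputable def partitionGF : PowerSeries ℤ :=
  PowerSeries.mk fun n => (Nat.card (Nat.Partition n) : ℤ)

/-- number of occurrences of `m` summed over all partitions of `n`. -/
noncomputable def cnt (n m : ℕ) : ℕ := ∑ μ : Nat.Partition n, μ.parts.count m

lemma cnt_of_lt {n m : ℕ} (h : n < m) : cnt n m = 0 := by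
  apply Finset.sum_eq_zero
  intro μ _
  rw [Multiset.count_eq_zero]
  intro hm
  exact absurd (μ.parts_sum ▸ Multiset.le_sum_of_mem hm) (Nat.not_le.2 h)

/-- partitions of `n - m` correspond to partitions of `n` containing `m`. -/
noncomputable def addPartEquiv (n m : ℕ) (hm : 0 < m) (hmn : m ≤ n) :
    Nat.Partition (n - m) ≃ {μ : Nat.Partition n // m ∈ μ.parts} where
  toFun μ := ⟨⟨m ::ₘ μ.parts, by
      intro i hi
      rcases Multiset.mem_cons.1 hi with h | h
      · exact h ▸ hm
      · exact μ.parts_pos h, by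
      rw [Multiset.sum_cons, μ.parts_sum]; omega⟩, Multiset.mem_cons_self _ _⟩
  invFun μ := ⟨μ.1.parts.erase m, fun hi => μ.1.parts_pos (Multiset.mem_of_mem_erase hi), by
      have h2 := Multiset.cons_erase μ.2
      have h3 : (m ::ₘ (μ.1.parts.erase m)).sum = n := by rw [h2, μ.1.parts_sum]
      rw [Multiset.sum_cons] at h3
      omega⟩
  left_inv μ := Nat.Partition.ext (Multiset.erase_cons_head m μ.parts)
  right_inv μ := Subtype.ext (Nat.Partition.ext (Multiset.cons_erase μ.2))

lemma cnt_rec {n m : ℕ} (hm : 0 < m) (hmn : m ≤ n) :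
    cnt n m = Nat.card (Nat.Partition (n - m)) + cnt (n - m) m := by
  classical
  unfold cnt
  rw [← Finset.sum_filter_of_ne (s := Finset.univ)
    (p := fun μ : Nat.Partition n => m ∈ μ.parts)
    (fun μ _ h => Multiset.count_ne_zero.mp h)]
  have h1 : ∑ μ ∈ Finset.univ.filter (fun μ : Nat.Partition n => m ∈ μ.parts),
      μ.parts.count m = ∑ μ : {μ : Nat.Partition n // m ∈ μ.parts}, μ.1.parts.count m := by
    rw [← Finset.sum_subtype (Finset.univ.filter
      (fun μ : Nat.Partition n => m ∈ μ.parts)) _ (fun μ => μ.parts.count m)]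
    intro μ
    simp
  rw [h1, ← Equiv.sum_comp (addPartEquiv n m hm hmn) (fun μ => μ.1.parts.count m)]
  simp only [addPartEquiv, Equiv.coe_fn_mk, Multiset.count_cons_self]
  rw [Finset.sum_add_distrib]
  simp [Nat.card_eq_fintype_card, add_comm]

open PowerSeries in
lemma coeff_G (m : ℕ) (hm : 0 < m) (n : ℕ) :
    PowerSeries.coeff (R := ℤ) n (partitionGF *
        (PowerSeries.C (R := ℤ) (m : ℤ) * PowerSeries.X ^ m *
          PowerSeries.invOfUnit (1 - PowerSeries.X ^ m) 1)) = (m : ℤ) * cnt n m := by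
  set G : PowerSeries ℤ := partitionGF *
    (PowerSeries.C (R := ℤ) (m : ℤ) * PowerSeries.X ^ m *
      PowerSeries.invOfUnit (1 - PowerSeries.X ^ m) 1) with hG
  have hunit : (1 - X ^ m : PowerSeries ℤ) * invOfUnit (1 - X ^ m) 1 = 1 := by
    apply PowerSeries.mul_invOfUnit
    simp [PowerSeries.constantCoeff_X, zero_pow hm.ne']
  have hGrec : G = G * X ^ m + partitionGF * C (R := ℤ) (m : ℤ) * X ^ m := by
    have h : G * (1 - X ^ m) = partitionGF * C (R := ℤ) (m : ℤ) * X ^ m := by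
      calc G * (1 - X ^ m)
          = partitionGF * C (R := ℤ) (m : ℤ) * X ^ m *
              ((1 - X ^ m) * invOfUnit (1 - X ^ m) 1) := by rw [hG]; ring
        _ = partitionGF * C (R := ℤ) (m : ℤ) * X ^ m := by rw [hunit, mul_one]
    linear_combination h
  induction n using Nat.strong_induction_on with
  | _ n ih =>
    conv_lhs => rw [hGrec]
    rw [(PowerSeries.coeff (R := ℤ) n).map_add, PowerSeries.coeff_mul_X_pow',
      PowerSeries.coeff_mul_X_pow']
    have hcoeff : ∀ i : ℕ, PowerSeries.coeff (R := ℤ) i (partitionGF * C (R := ℤ) (m : ℤ)) =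
        (Nat.card (Nat.Partition i) : ℤ) * m := by
      intro i
      rw [PowerSeries.coeff_mul_C, partitionGF, PowerSeries.coeff_mk]
    by_cases hmn : m ≤ n
    · rw [if_pos hmn, if_pos hmn, ih (n - m) (by omega), hcoeff, cnt_rec hm hmn]
      push_cast
      ring
    · rw [if_neg hmn, if_neg hmn, cnt_of_lt (by omega)]
      simp

lemma Msum_eq (p k : ℕ) (hp : 2 ≤ p) (hk0 : 0 < k) (n : ℕ) (s : Multiset ℕ)
    (hs : ∀ a ∈ s, a ≤ n) :
    Msum p k s = ∑ j ∈ Finset.range (n + 1), (k * p ^ j) * s.count (k * p ^ j) := by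
  classical
  have hinj : ∀ j j' : ℕ, k * p ^ j = k * p ^ j' → j = j' := by
    intro j j' h
    exact Nat.pow_right_injective hp (Nat.eq_of_mul_eq_mul_left hk0 h)
  induction s using Multiset.induction with
  | empty => simp [Msum]
  | cons a s ih =>
    have ha : a ≤ n := hs a (Multiset.mem_cons_self a s)
    have ih' := ih (fun b hb => hs b (Multiset.mem_cons_of_mem hb))
    have key : (if ∃ j : ℕ, a = k * p ^ j then a else 0) =
        ∑ j ∈ Finset.range (n + 1), (k * p ^ j) * (if k * p ^ j = a then 1 else 0) := by
      by_cases hPa : ∃ j : ℕ, a = k * p ^ j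
      · obtain ⟨j0, hj0⟩ := hPa
        have hj0n : j0 ∈ Finset.range (n + 1) := by
          have h1 : j0 < p ^ j0 := Nat.lt_pow_self hp
          have h2 : p ^ j0 ≤ k * p ^ j0 := Nat.le_mul_of_pos_left _ hk0
          simp only [Finset.mem_range]
          omega
        rw [if_pos ⟨j0, hj0⟩, Finset.sum_eq_single_of_mem j0 hj0n]
        · rw [if_pos hj0.symm]; omega
        · intro j _ hj
          rw [if_neg, mul_zero]
          intro h
          exact hj (hinj j j0 (h.trans hj0))
      · rw [if_neg hPa]
        symm
        apply Finset.sum_eq_zero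
        intro j _
        rw [if_neg, mul_zero]
        intro h
        exact hPa ⟨j, h.symm⟩
    calc Msum p k (a ::ₘ s)
        = (if ∃ j : ℕ, a = k * p ^ j then a else 0) + Msum p k s := by
          unfold Msum
          rw [Multiset.filter_cons, Multiset.sum_add]
          congr 1
          split <;> simp
      _ = ∑ j ∈ Finset.range (n + 1),
            (k * p ^ j) * ((if k * p ^ j = a then 1 else 0) + s.count (k * p ^ j)) := by
          rw [key, ih', ← Finset.sum_add_distrib]
          congr 1
          funext j
          ring
      _ = ∑ j ∈ Finset.range (n + 1), (k * p ^ j) * (a ::ₘ s).count (k * p ^ j) := by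
          refine Finset.sum_congr rfl fun j _ => ?_
          rw [Multiset.count_cons]
          ring_nf

/-- `Σₙ (Σ_{μ⊢n} M_μ^{(k)}) xⁿ = P(x) · Σ_j k pʲ x^{k pʲ}/(1 - x^{k pʲ})`. Both sides have the
same `n`-th coefficient for every `n`; on the right the sum over `j` is truncated at `j ≤ n`,
which does not affect the coefficient of `xⁿ` since the omitted summands have order `> n`. -/
theorem firstMoment_genFun (p k : ℕ) (hp : p.Prime) (hk0 : 0 < k) (hk : Nat.Coprime k p) :
    ∀ n : ℕ,
      PowerSeries.coeff (R := ℤ) n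
          (PowerSeries.mk fun n => ∑ μ : Nat.Partition n, (Msum p k μ.parts : ℤ)) =
        PowerSeries.coeff (R := ℤ) n
          (partitionGF *
            ∑ j ∈ Finset.range (n + 1),
              PowerSeries.C (R := ℤ) ((k * p ^ j : ℕ) : ℤ) * PowerSeries.X ^ (k * p ^ j) *
                PowerSeries.invOfUnit (1 - PowerSeries.X ^ (k * p ^ j)) 1) := by
  intro n
  have hp2 : 2 ≤ p := hp.two_le
  rw [PowerSeries.coeff_mk]
  have hL : ∀ μ : Nat.Partition n, (Msum p k μ.parts : ℤ) =
      ∑ j ∈ Finset.range (n + 1),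
        ((k * p ^ j : ℕ) : ℤ) * (μ.parts.count (k * p ^ j) : ℤ) := by
    intro μ
    rw [Msum_eq p k hp2 hk0 n μ.parts
      (fun a ha => μ.parts_sum ▸ Multiset.le_sum_of_mem ha)]
    push_cast
    rfl
  calc ∑ μ : Nat.Partition n, (Msum p k μ.parts : ℤ)
      = ∑ j ∈ Finset.range (n + 1), ((k * p ^ j : ℕ) : ℤ) * (cnt n (k * p ^ j) : ℤ) := by
        simp_rw [hL]
        rw [Finset.sum_comm]
        refine Finset.sum_congr rfl fun j _ => ?_
        rw [← Finset.mul_sum]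
        congr 1
        rw [cnt]
        push_cast
        rfl
    _ = _ := by
        rw [Finset.mul_sum, map_sum]
        refine Finset.sum_congr rfl fun j _ => ?_
        rw [coeff_G (k * p ^ j) (by positivity) n]
end

section
/- Fix a prime p and an integer k coprime to p. Then Σ_{n≥0} (Σ_{μ ⊢ n} (M_μ^{(k)})²) x^n = P(x)·(F_k(x)² + Σ_{j≥0} k²·p^{2j}·x^{k p^j}/(1 − x^{k p^j})²) as formal power series, where F_k(x) = Σ_{j≥0} k p^j x^{k p^j}/(1 − x^{k p^j}). -/
open scoped BigOperators

/-- The truncation (up to `j ≤ N`) of `F_k(x) = Σ_j k pʲ x^{k pʲ}/(1 - x^{k pʲ})`. -/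
noncomputable def Fk (p k N : ℕ) : PowerSeries ℤ :=
  ∑ j ∈ Finset.range (N + 1),
    PowerSeries.C ((k * p ^ j : ℕ) : ℤ) * PowerSeries.X ^ (k * p ^ j) *
      PowerSeries.invOfUnit (1 - PowerSeries.X ^ (k * p ^ j)) 1

section Aux
open Finset PowerSeries

lemma apow_inj {p k : ℕ} (hp : 2 ≤ p) (hk0 : 0 < k) {i j : ℕ}
    (h : k * p ^ i = k * p ^ j) : i = j := by
  have := Nat.eq_of_mul_eq_mul_left hk0 h
  exact Nat.pow_right_injective hp this

lemma ite_sum_eq {p k n x : ℕ} (hp : 2 ≤ p) (hk0 : 0 < k) (hx : x ≤ n) :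
    letI := Classical.decPred fun a : ℕ => ∃ j : ℕ, a = k * p ^ j
    (∑ j ∈ Finset.range (n+1), if k * p ^ j = x then k * p ^ j else 0)
      = if (∃ j : ℕ, x = k * p ^ j) then x else 0 := by
  classical
  by_cases hex : ∃ j : ℕ, x = k * p ^ j
  · obtain ⟨j0, rfl⟩ := hex
    have hj0 : j0 < n + 1 := by
      have h1 : j0 < p ^ j0 := Nat.lt_pow_self hp
      have h2 : p ^ j0 ≤ k * p ^ j0 := Nat.le_mul_of_pos_left _ hk0
      omega
    rw [if_pos ⟨j0, rfl⟩]
    rw [Finset.sum_eq_single j0]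
    · simp
    · intro j hj hne
      rw [if_neg (fun hcontra => hne (apow_inj hp hk0 hcontra))]
    · intro h; exact absurd (Finset.mem_range.mpr hj0) h
  · rw [if_neg hex]
    apply Finset.sum_eq_zero
    intro j hj
    rw [if_neg (fun hcontra => hex ⟨j, hcontra.symm⟩)]

lemma msum_eq (p k n : ℕ) (hp : 2 ≤ p) (hk0 : 0 < k) (s : Multiset ℕ)
    (hs : ∀ x ∈ s, x ≤ n) :
    Msum p k s = ∑ j ∈ Finset.range (n+1), (k * p ^ j) * s.count (k * p ^ j) := by
  classical
  induction s using Multiset.induction_on with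
  | empty => simp [Msum]
  | cons x s ih =>
    have hx : x ≤ n := hs x (Multiset.mem_cons_self x s)
    have ih' := ih (fun y hy => hs y (Multiset.mem_cons_of_mem hy))
    unfold Msum at *
    rw [Multiset.filter_cons]
    have hthis := ite_sum_eq (n := n) (x := x) hp hk0 hx
    simp only [Multiset.count_cons, mul_add, mul_ite, mul_one, mul_zero,
      Finset.sum_add_distrib, ih', hthis]
    by_cases hPx : ∃ j : ℕ, x = k * p ^ j
    · rw [if_pos hPx, if_pos hPx]
      simp only [Multiset.sum_add, Multiset.sum_singleton]
      omega
    · rw [if_neg hPx, if_neg hPx]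
      simpa using ih'


noncomputable def remEquiv (n : ℕ) (c : Multiset ℕ) (hc : ∀ x ∈ c, 0 < x) (h : c.sum ≤ n) :
    {μ : Nat.Partition n // c ≤ μ.parts} ≃ Nat.Partition (n - c.sum) where
  toFun μ := ⟨μ.1.parts - c,
    fun {x} hx => μ.1.parts_pos (Multiset.mem_of_le (Multiset.sub_le_self _ _) hx),
    by
      have h2 : (μ.1.parts - c) + c = μ.1.parts := tsub_add_cancel_of_le μ.2
      have h3 := congrArg Multiset.sum h2
      rw [Multiset.sum_add, μ.1.parts_sum] at h3
      omega⟩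
  invFun ν := ⟨⟨ν.parts + c,
    fun {x} hx => by
      rcases Multiset.mem_add.mp hx with h' | h'
      · exact ν.parts_pos h'
      · exact hc x h',
    by rw [Multiset.sum_add, ν.parts_sum]; omega⟩,
    Multiset.le_add_left _ _⟩
  left_inv μ := Subtype.ext (Nat.Partition.ext (tsub_add_cancel_of_le μ.2))
  right_inv ν := Nat.Partition.ext (by simp)

lemma rem (n : ℕ) (c : Multiset ℕ) (hc : ∀ x ∈ c, 0 < x) :
    (∑ μ : Nat.Partition n, if c ≤ μ.parts then (1:ℤ) else 0)
      = if c.sum ≤ n then (Nat.card (Nat.Partition (n - c.sum)) : ℤ) else 0 := by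
  classical
  rw [Finset.sum_boole]
  by_cases h : c.sum ≤ n
  · rw [if_pos h, ← Fintype.card_subtype, Nat.card_eq_fintype_card]
    norm_cast
    exact Fintype.card_congr (remEquiv n c hc h)
  · rw [if_neg h]
    convert Nat.cast_zero
    rw [Finset.card_eq_zero]
    ext μ
    simp only [Finset.mem_filter, Finset.mem_univ, true_and, Finset.notMem_empty, iff_false]
    intro hle
    obtain ⟨u, hu⟩ := Multiset.le_iff_exists_add.mp hle
    have := μ.parts_sum
    rw [hu, Multiset.sum_add] at this
    omega


noncomputable def Gs (a : ℕ) : PowerSeries ℤ := mk fun v => if a ∣ v then 1 else 0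

lemma one_sub_mul_Gs (a : ℕ) (ha : 0 < a) : (1 - X ^ a) * Gs a = 1 := by
  ext v
  rw [sub_mul, one_mul, map_sub, coeff_X_pow_mul', coeff_one]
  simp only [Gs, coeff_mk]
  rcases Nat.eq_zero_or_pos v with rfl | hv
  · simp only [Nat.dvd_zero, if_pos rfl, if_pos trivial]
    rw [if_neg (by omega : ¬ a ≤ 0)]
    ring
  · rw [if_neg hv.ne']
    by_cases hle : a ≤ v
    · rw [if_pos hle]
      have : a ∣ v ↔ a ∣ v - a := by
        constructor
        · intro h; exact (Nat.dvd_sub h dvd_rfl)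
        · intro h
          have := Nat.dvd_add h (dvd_refl a)
          rwa [Nat.sub_add_cancel hle] at this
      by_cases hdvd : a ∣ v
      · rw [if_pos hdvd, if_pos (this.mp hdvd)]; ring
      · rw [if_neg hdvd, if_neg (fun hh => hdvd (this.mpr hh))]; ring
    · rw [if_neg hle, if_neg (fun hdvd => hle (Nat.le_of_dvd hv hdvd))]
      ring

lemma invOfUnit_eq_Gs (a : ℕ) (ha : 0 < a) :
    invOfUnit (1 - X ^ a : PowerSeries ℤ) 1 = Gs a := by
  have hconst : constantCoeff (1 - X ^ a : PowerSeries ℤ) = ((1 : ℤˣ) : ℤ) := by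
    rw [map_sub, map_one, map_pow, constantCoeff_X, zero_pow ha.ne', sub_zero]
    simp
  have h1 := mul_invOfUnit (1 - X ^ a : PowerSeries ℤ) 1 hconst
  have h2 := one_sub_mul_Gs a ha
  calc invOfUnit (1 - X ^ a : PowerSeries ℤ) 1
      = invOfUnit (1 - X ^ a : PowerSeries ℤ) 1 * ((1 - X ^ a) * Gs a) := by rw [h2, mul_one]
    _ = ((1 - X ^ a) * invOfUnit (1 - X ^ a : PowerSeries ℤ) 1) * Gs a := by
        rw [← mul_assoc, mul_comm (invOfUnit (1 - X ^ a : PowerSeries ℤ) 1) (1 - X ^ a)]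
    _ = Gs a := by rw [h1, one_mul]

/-- indicator of nonzero multiples of `a` -/
def ee (a v : ℕ) : ℤ := if a ∣ v ∧ v ≠ 0 then 1 else 0

lemma Xpow_mul_Gs (a : ℕ) (ha : 0 < a) : (X ^ a : PowerSeries ℤ) * Gs a = mk (ee a) := by
  ext v
  rw [coeff_X_pow_mul', coeff_mk]
  simp only [Gs, coeff_mk, ee]
  by_cases hle : a ≤ v
  · rw [if_pos hle]
    have hv : v ≠ 0 := by omega
    have : a ∣ v - a ↔ a ∣ v := by
      constructor
      · intro h
        have := Nat.dvd_add h (dvd_refl a)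
        rwa [Nat.sub_add_cancel hle] at this
      · intro h; exact (Nat.dvd_sub h dvd_rfl)
    by_cases hdvd : a ∣ v - a
    · rw [if_pos hdvd, if_pos ⟨this.mp hdvd, hv⟩]
    · rw [if_neg hdvd, if_neg (fun hh => hdvd (this.mpr hh.1))]
  · rw [if_neg hle]
    rw [if_neg (fun hh : a ∣ v ∧ v ≠ 0 => hle (Nat.le_of_dvd (Nat.pos_of_ne_zero hh.2) hh.1))]

lemma one_le_apow {p k : ℕ} (hp : 2 ≤ p) (hk0 : 0 < k) (j : ℕ) : 0 < k * p ^ j :=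
  Nat.mul_pos hk0 (pow_pos (by omega) j)

def dd (a v : ℕ) : ℤ := if a ∣ v then 1 else 0

noncomputable def gg (n m : ℕ) : ℤ :=
  if m ≤ n then (Nat.card (Nat.Partition (n - m)) : ℤ) else 0

lemma ee_expand {n a v : ℕ} (ha : 0 < a) (hv : v ≤ n) :
    ee a v = ∑ s ∈ Finset.Icc 1 n, if v = s * a then (1:ℤ) else 0 := by
  unfold ee
  by_cases h : a ∣ v ∧ v ≠ 0
  · obtain ⟨⟨s0, rfl⟩, hv0⟩ := h
    have hs0 : s0 ∈ Finset.Icc 1 n := by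
      rw [Finset.mem_Icc]
      have h1 : 1 ≤ s0 := Nat.pos_of_ne_zero (by rintro rfl; simp at hv0)
      have h2 : s0 ≤ a * s0 := Nat.le_mul_of_pos_left _ ha
      omega
    rw [if_pos ⟨⟨s0, rfl⟩, hv0⟩, eq_comm]
    rw [Finset.sum_eq_single s0]
    · rw [if_pos (by ring)]
    · intro s hs hne
      rw [if_neg]
      intro hEq
      exact hne (by nlinarith [Nat.eq_of_mul_eq_mul_right ha (by linarith [hEq] : s * a = s0 * a)])
    · intro hcon; exact absurd hs0 hcon
  · rw [if_neg h, eq_comm]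
    apply Finset.sum_eq_zero
    intro s hs
    rw [Finset.mem_Icc] at hs
    rw [if_neg]
    intro hEq
    subst hEq
    exact h ⟨Dvd.intro_left s rfl, Nat.mul_ne_zero (by omega) ha.ne'⟩

lemma dd_expand {n a v : ℕ} (ha : 0 < a) (hv : v ≤ n) :
    dd a v = ∑ t ∈ Finset.range (n + 1), if v = t * a then (1:ℤ) else 0 := by
  unfold dd
  by_cases h : a ∣ v
  · obtain ⟨t0, rfl⟩ := h
    have ht0 : t0 ∈ Finset.range (n + 1) := by
      rw [Finset.mem_range]
      have h2 : t0 ≤ a * t0 := Nat.le_mul_of_pos_left _ ha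
      omega
    rw [if_pos ⟨t0, rfl⟩, eq_comm, Finset.sum_eq_single t0]
    · rw [if_pos (by ring)]
    · intro t ht hne
      rw [if_neg]
      intro hEq
      exact hne (Nat.eq_of_mul_eq_mul_right ha (by linarith [hEq] : t * a = t0 * a))
    · intro hcon; exact absurd ht0 hcon
  · rw [if_neg h, eq_comm]
    apply Finset.sum_eq_zero
    intro t ht
    rw [if_neg]
    intro hEq
    subst hEq
    exact h (Dvd.intro_left t rfl)

lemma anti2 (w c1 c2 : ℕ) :
    (∑ q ∈ Finset.HasAntidiagonal.antidiagonal w, (if q.1 = c1 then (1:ℤ) else 0) * (if q.2 = c2 then 1 else 0))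
      = if w = c1 + c2 then 1 else 0 := by
  by_cases h : w = c1 + c2
  · subst h
    rw [if_pos rfl, Finset.sum_eq_single (c1, c2)]
    · simp
    · intro q hq hne
      rw [Finset.HasAntidiagonal.mem_antidiagonal] at hq
      by_cases h1 : q.1 = c1
      · rw [if_neg (fun h2 => hne (Prod.ext h1 h2))]
        ring
      · rw [if_neg h1]; ring
    · intro hcon
      exact absurd (Finset.HasAntidiagonal.mem_antidiagonal.mpr (by simp)) hcon
  · rw [if_neg h]
    apply Finset.sum_eq_zero
    intro q hq
    rw [Finset.HasAntidiagonal.mem_antidiagonal] at hq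
    by_cases h1 : q.1 = c1
    · rw [if_pos h1, if_neg (fun h2 : q.2 = c2 => h (by rw [← h1, ← h2]; exact hq.symm))]
      ring
    · rw [if_neg h1]; ring

lemma anti1 (F : ℕ → ℤ) (nn c : ℕ) :
    (∑ q ∈ Finset.HasAntidiagonal.antidiagonal nn, F q.1 * (if q.2 = c then (1:ℤ) else 0))
      = if c ≤ nn then F (nn - c) else 0 := by
  by_cases h : c ≤ nn
  · rw [if_pos h, Finset.sum_eq_single (nn - c, c)]
    · simp
    · intro q hq hne
      rw [Finset.HasAntidiagonal.mem_antidiagonal] at hq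
      rw [if_neg]
      · ring
      · intro h2
        apply hne
        have : q.1 = nn - c := by omega
        exact Prod.ext this h2
    · intro hcon
      refine absurd (Finset.HasAntidiagonal.mem_antidiagonal.mpr ?_) hcon
      simp only []
      omega
  · rw [if_neg h]
    apply Finset.sum_eq_zero
    intro q hq
    rw [Finset.HasAntidiagonal.mem_antidiagonal] at hq
    rw [if_neg]
    · ring
    · intro h2
      rw [h2] at hq
      omega

lemma conv_gen (n : ℕ) (F E1 E2 : ℕ → ℤ) (S T : Finset ℕ) (φ ψ : ℕ → ℕ)
    (hE1 : ∀ v ≤ n, E1 v = ∑ s ∈ S, if v = φ s then (1:ℤ) else 0)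
    (hE2 : ∀ v ≤ n, E2 v = ∑ t ∈ T, if v = ψ t then (1:ℤ) else 0) :
    (∑ q ∈ Finset.HasAntidiagonal.antidiagonal n, F q.1 * ∑ r ∈ Finset.HasAntidiagonal.antidiagonal q.2, E1 r.1 * E2 r.2)
      = ∑ s ∈ S, ∑ t ∈ T, (if φ s + ψ t ≤ n then F (n - (φ s + ψ t)) else 0) := by
  have step1 : ∀ q ∈ Finset.HasAntidiagonal.antidiagonal n,
      (∑ r ∈ Finset.HasAntidiagonal.antidiagonal q.2, E1 r.1 * E2 r.2)
        = ∑ s ∈ S, ∑ t ∈ T, (if q.2 = φ s + ψ t then (1:ℤ) else 0) := by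
    intro q hq
    rw [Finset.HasAntidiagonal.mem_antidiagonal] at hq
    calc (∑ r ∈ Finset.HasAntidiagonal.antidiagonal q.2, E1 r.1 * E2 r.2)
        = ∑ r ∈ Finset.HasAntidiagonal.antidiagonal q.2, ∑ s ∈ S, ∑ t ∈ T,
            (if r.1 = φ s then (1:ℤ) else 0) * (if r.2 = ψ t then 1 else 0) := by
          apply Finset.sum_congr rfl
          intro r hr
          rw [Finset.HasAntidiagonal.mem_antidiagonal] at hr
          rw [hE1 r.1 (by omega), hE2 r.2 (by omega), Finset.sum_mul_sum]
      _ = ∑ s ∈ S, ∑ t ∈ T, ∑ r ∈ Finset.HasAntidiagonal.antidiagonal q.2,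
            (if r.1 = φ s then (1:ℤ) else 0) * (if r.2 = ψ t then 1 else 0) := by
          rw [Finset.sum_comm]
          apply Finset.sum_congr rfl
          intro s _
          rw [Finset.sum_comm]
      _ = ∑ s ∈ S, ∑ t ∈ T, (if q.2 = φ s + ψ t then (1:ℤ) else 0) := by
          apply Finset.sum_congr rfl; intro s _
          apply Finset.sum_congr rfl; intro t _
          exact anti2 q.2 (φ s) (ψ t)
  calc (∑ q ∈ Finset.HasAntidiagonal.antidiagonal n, F q.1 * ∑ r ∈ Finset.HasAntidiagonal.antidiagonal q.2, E1 r.1 * E2 r.2)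
      = ∑ q ∈ Finset.HasAntidiagonal.antidiagonal n, ∑ s ∈ S, ∑ t ∈ T,
          F q.1 * (if q.2 = φ s + ψ t then (1:ℤ) else 0) := by
        apply Finset.sum_congr rfl
        intro q hq
        rw [step1 q hq, Finset.mul_sum]
        apply Finset.sum_congr rfl
        intro s _
        rw [Finset.mul_sum]
    _ = ∑ s ∈ S, ∑ t ∈ T, ∑ q ∈ Finset.HasAntidiagonal.antidiagonal n,
          F q.1 * (if q.2 = φ s + ψ t then (1:ℤ) else 0) := by
        rw [Finset.sum_comm]
        apply Finset.sum_congr rfl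
        intro s _
        rw [Finset.sum_comm]
    _ = ∑ s ∈ S, ∑ t ∈ T, (if φ s + ψ t ≤ n then F (n - (φ s + ψ t)) else 0) := by
        apply Finset.sum_congr rfl; intro s _
        apply Finset.sum_congr rfl; intro t _
        exact anti1 F n (φ s + ψ t)

lemma count_expand (n : ℕ) (G : ℕ → ℤ) (hG : ∀ r, n < r → G r = 0)
    (S : Finset (ℕ × ℕ)) (h : ℕ × ℕ → ℕ) (hh : ∀ q ∈ S, 1 ≤ h q) :
    (∑ q ∈ S, G (h q))
      = ∑ r ∈ Finset.Icc 1 n, ((S.filter (fun q => h q = r)).card : ℤ) * G r := by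
  classical
  have step : ∀ q ∈ S, G (h q) = ∑ r ∈ Finset.Icc 1 n, if h q = r then G r else 0 := by
    intro q hq
    by_cases hle : h q ≤ n
    · rw [Finset.sum_eq_single (h q)]
      · rw [if_pos rfl]
      · intro r hr hne; rw [if_neg (fun hc => hne hc.symm)]
      · intro hcon
        exact absurd (Finset.mem_Icc.mpr ⟨hh q hq, hle⟩) hcon
    · rw [hG _ (by omega)]
      symm
      apply Finset.sum_eq_zero
      intro r hr
      rw [Finset.mem_Icc] at hr
      rw [if_neg (by omega)]
  rw [Finset.sum_congr rfl step, Finset.sum_comm]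
  apply Finset.sum_congr rfl
  intro r _
  rw [← Finset.sum_filter, Finset.sum_const, nsmul_eq_mul]

lemma card_max (n r : ℕ) (hr : r ∈ Finset.Icc 1 n) :
    (((Finset.Icc 1 n) ×ˢ (Finset.Icc 1 n)).filter (fun q => max q.1 q.2 = r)).card
      = 2 * r - 1 := by
  rw [Finset.mem_Icc] at hr
  have hset : ((Finset.Icc 1 n) ×ˢ (Finset.Icc 1 n)).filter (fun q => max q.1 q.2 = r)
      = ((Finset.Icc 1 r).image (fun t => (r, t))) ∪ ((Finset.Icc 1 (r-1)).image (fun s => (s, r))) := by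
    ext q
    simp only [Finset.mem_filter, Finset.mem_product, Finset.mem_Icc, Finset.mem_union,
      Finset.mem_image, Prod.ext_iff]
    constructor
    · rintro ⟨⟨⟨h1, h2⟩, h3, h4⟩, h5⟩
      rcases le_total q.1 q.2 with h | h
      · rw [max_eq_right h] at h5
        by_cases he : q.1 = r
        · exact Or.inl ⟨q.2, ⟨by omega, by omega⟩, he.symm, rfl⟩
        · exact Or.inr ⟨q.1, ⟨by omega, by omega⟩, rfl, h5.symm⟩
      · rw [max_eq_left h] at h5
        exact Or.inl ⟨q.2, ⟨by omega, by omega⟩, h5.symm, rfl⟩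
    · rintro (⟨t, ht, h1, h2⟩ | ⟨s, hs, h1, h2⟩)
      · constructor
        · constructor <;> omega
        · rw [← h1, ← h2]; omega
      · constructor
        · constructor <;> omega
        · rw [← h1, ← h2]; omega
  rw [hset, Finset.card_union_of_disjoint, Finset.card_image_of_injective,
    Finset.card_image_of_injective, Nat.card_Icc, Nat.card_Icc]
  · omega
  · intro x y hxy; simpa using congrArg Prod.fst hxy
  · intro x y hxy; simpa using congrArg Prod.snd hxy
  · rw [Finset.disjoint_left]
    rintro q hq1 hq2
    simp only [Finset.mem_image, Finset.mem_Icc] at hq1 hq2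
    obtain ⟨t, ht, rfl⟩ := hq1
    obtain ⟨s, hs, hEq⟩ := hq2
    have := congrArg Prod.fst hEq
    simp at this
    omega

lemma card_add_IccIcc (n r : ℕ) (hr : r ∈ Finset.Icc 1 n) :
    (((Finset.Icc 1 n) ×ˢ (Finset.Icc 1 n)).filter (fun q => q.1 + q.2 = r)).card
      = r - 1 := by
  rw [Finset.mem_Icc] at hr
  have hset : ((Finset.Icc 1 n) ×ˢ (Finset.Icc 1 n)).filter (fun q => q.1 + q.2 = r)
      = (Finset.Icc 1 (r-1)).image (fun s => (s, r - s)) := by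
    ext q
    simp only [Finset.mem_filter, Finset.mem_product, Finset.mem_Icc, Finset.mem_image,
      Prod.ext_iff]
    constructor
    · rintro ⟨⟨⟨h1, h2⟩, h3, h4⟩, h5⟩
      exact ⟨q.1, ⟨by omega, by omega⟩, rfl, by omega⟩
    · rintro ⟨s, hs, h1, h2⟩
      refine ⟨⟨⟨by omega, by omega⟩, by omega, by omega⟩, by omega⟩
  rw [hset, Finset.card_image_of_injective, Nat.card_Icc]
  · omega
  · intro x y hxy; simpa using congrArg Prod.fst hxy

lemma card_add_IccRange (n r : ℕ) (hr : r ∈ Finset.Icc 1 n) :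
    (((Finset.Icc 1 n) ×ˢ (Finset.range (n+1))).filter (fun q => q.1 + q.2 = r)).card
      = r := by
  rw [Finset.mem_Icc] at hr
  have hset : ((Finset.Icc 1 n) ×ˢ (Finset.range (n+1))).filter (fun q => q.1 + q.2 = r)
      = (Finset.Icc 1 r).image (fun s => (s, r - s)) := by
    ext q
    simp only [Finset.mem_filter, Finset.mem_product, Finset.mem_Icc, Finset.mem_image,
      Finset.mem_range, Prod.ext_iff]
    constructor
    · rintro ⟨⟨⟨h1, h2⟩, h3⟩, h5⟩
      exact ⟨q.1, ⟨by omega, by omega⟩, rfl, by omega⟩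
    · rintro ⟨s, hs, h1, h2⟩
      refine ⟨⟨⟨by omega, by omega⟩, by omega⟩, by omega⟩
  rw [hset, Finset.card_image_of_injective, Nat.card_Icc]
  · omega
  · intro x y hxy; simpa using congrArg Prod.fst hxy

lemma gg_vanish (n m : ℕ) (h : n < m) : gg n m = 0 := by
  rw [gg, if_neg (by omega)]

lemma star (n a : ℕ) (ha : 0 < a) :
    (∑ s ∈ Finset.Icc 1 n, ∑ t ∈ Finset.Icc 1 n, gg n (max s t * a))
      = (∑ s ∈ Finset.Icc 1 n, ∑ t ∈ Finset.Icc 1 n, gg n (s * a + t * a))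
        + ∑ s ∈ Finset.Icc 1 n, ∑ t ∈ Finset.range (n+1), gg n (s * a + t * a) := by
  have hG : ∀ r, n < r → gg n (r * a) = 0 := fun r hrn =>
    gg_vanish n (r * a) (by nlinarith)
  have e1 : (∑ s ∈ Finset.Icc 1 n, ∑ t ∈ Finset.Icc 1 n, gg n (max s t * a))
      = ∑ q ∈ (Finset.Icc 1 n) ×ˢ (Finset.Icc 1 n), gg n (max q.1 q.2 * a) := by
    rw [Finset.sum_product]
  have e2 : (∑ s ∈ Finset.Icc 1 n, ∑ t ∈ Finset.Icc 1 n, gg n (s * a + t * a))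
      = ∑ q ∈ (Finset.Icc 1 n) ×ˢ (Finset.Icc 1 n), gg n ((q.1 + q.2) * a) := by
    rw [Finset.sum_product]
    congr 1; ext s; congr 1; ext t; rw [add_mul]
  have e3 : (∑ s ∈ Finset.Icc 1 n, ∑ t ∈ Finset.range (n+1), gg n (s * a + t * a))
      = ∑ q ∈ (Finset.Icc 1 n) ×ˢ (Finset.range (n+1)), gg n ((q.1 + q.2) * a) := by
    rw [Finset.sum_product]
    congr 1; ext s; congr 1; ext t; rw [add_mul]
  rw [e1, e2, e3]
  rw [count_expand n (fun r => gg n (r * a)) hG _ (fun q => max q.1 q.2)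
    (by intro q hq; simp only [Finset.mem_product, Finset.mem_Icc] at hq; show 1 ≤ max q.1 q.2; omega)]
  rw [count_expand n (fun r => gg n (r * a)) hG _ (fun q => q.1 + q.2)
    (by intro q hq; simp only [Finset.mem_product, Finset.mem_Icc] at hq; show 1 ≤ q.1 + q.2; omega)]
  rw [count_expand n (fun r => gg n (r * a)) hG ((Finset.Icc 1 n) ×ˢ (Finset.range (n+1))) (fun q => q.1 + q.2)
    (by intro q hq; simp only [Finset.mem_product, Finset.mem_Icc, Finset.mem_range] at hq; show 1 ≤ q.1 + q.2; omega)]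
  rw [← Finset.sum_add_distrib]
  apply Finset.sum_congr rfl
  intro r hr
  rw [card_max n r hr, card_add_IccIcc n r hr, card_add_IccRange n r hr]
  have hr1 : 1 ≤ r := (Finset.mem_Icc.mp hr).1
  have : ((2 * r - 1 : ℕ) : ℤ) = ((r - 1 : ℕ) : ℤ) + (r : ℤ) := by omega
  rw [this]
  ring

lemma mcard_le_sum (s : Multiset ℕ) (h : ∀ x ∈ s, 0 < x) : Multiset.card s ≤ s.sum := by
  induction s using Multiset.induction_on with
  | empty => simp
  | cons x s ih =>
    rw [Multiset.card_cons, Multiset.sum_cons]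
    have hx := h x (Multiset.mem_cons_self x s)
    have := ih (fun y hy => h y (Multiset.mem_cons_of_mem hy))
    omega

lemma count_le_n (n : ℕ) (μ : Nat.Partition n) (a : ℕ) : μ.parts.count a ≤ n := by
  calc μ.parts.count a ≤ Multiset.card μ.parts := Multiset.count_le_card _ _
    _ ≤ μ.parts.sum := mcard_le_sum _ (fun x hx => μ.parts_pos hx)
    _ = n := μ.parts_sum

lemma nat_expand (n m : ℕ) (hm : m ≤ n) :
    (m : ℤ) = ∑ s ∈ Finset.Icc 1 n, if s ≤ m then (1:ℤ) else 0 := by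
  classical
  rw [Finset.sum_boole]
  have : (Finset.Icc 1 n).filter (fun s => s ≤ m) = Finset.Icc 1 m := by
    ext s
    simp only [Finset.mem_filter, Finset.mem_Icc]
    omega
  rw [this, Nat.card_Icc]
  omega

lemma iteone_mul_iteone (A B : Prop) [Decidable A] [Decidable B] :
    (if A then (1:ℤ) else 0) * (if B then 1 else 0) = if A ∧ B then 1 else 0 := by
  split_ifs <;> simp_all

lemma repl2_le {a b : ℕ} (hab : a ≠ b) (s t : ℕ) (u : Multiset ℕ) :
    (Multiset.replicate s a + Multiset.replicate t b ≤ u)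
      ↔ (s ≤ u.count a ∧ t ≤ u.count b) := by
  rw [Multiset.le_iff_count]
  constructor
  · intro h
    constructor
    · have := h a
      rwa [Multiset.count_add, Multiset.count_replicate, if_pos rfl,
        Multiset.count_replicate, if_neg (fun hh => hab hh.symm), add_zero] at this
    · have := h b
      rwa [Multiset.count_add, Multiset.count_replicate, if_neg hab,
        Multiset.count_replicate, if_pos rfl, zero_add] at this
  · rintro ⟨h1, h2⟩ x
    rw [Multiset.count_add, Multiset.count_replicate, Multiset.count_replicate]
    by_cases hxa : x = a
    · subst hxa
      rw [if_pos rfl, if_neg (fun hh => hab hh.symm), add_zero]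
      exact h1
    · rw [if_neg (fun hh => hxa hh.symm)]
      by_cases hxb : x = b
      · subst hxb
        rw [if_pos rfl, zero_add]
        exact h2
      · rw [if_neg (fun hh => hxb hh.symm)]
        omega

lemma sum_count_mul_count (n a b : ℕ) (ha : 0 < a) (hb : 0 < b) (hab : a ≠ b) :
    (∑ μ : Nat.Partition n, (μ.parts.count a : ℤ) * (μ.parts.count b : ℤ))
      = ∑ s ∈ Finset.Icc 1 n, ∑ t ∈ Finset.Icc 1 n, gg n (s * a + t * b) := by
  classical
  calc (∑ μ : Nat.Partition n, (μ.parts.count a : ℤ) * (μ.parts.count b : ℤ))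
      = ∑ μ : Nat.Partition n, ∑ s ∈ Finset.Icc 1 n, ∑ t ∈ Finset.Icc 1 n,
          if Multiset.replicate s a + Multiset.replicate t b ≤ μ.parts then (1:ℤ) else 0 := by
        apply Finset.sum_congr rfl
        intro μ _
        rw [nat_expand n _ (count_le_n n μ a), nat_expand n _ (count_le_n n μ b),
          Finset.sum_mul_sum]
        apply Finset.sum_congr rfl; intro s _
        apply Finset.sum_congr rfl; intro t _
        rw [iteone_mul_iteone]
        exact if_congr (repl2_le hab s t μ.parts).symm rfl rfl
    _ = ∑ s ∈ Finset.Icc 1 n, ∑ t ∈ Finset.Icc 1 n, ∑ μ : Nat.Partition n,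
          (if Multiset.replicate s a + Multiset.replicate t b ≤ μ.parts then (1:ℤ) else 0) := by
        rw [Finset.sum_comm]
        apply Finset.sum_congr rfl
        intro s _
        rw [Finset.sum_comm]
    _ = ∑ s ∈ Finset.Icc 1 n, ∑ t ∈ Finset.Icc 1 n, gg n (s * a + t * b) := by
        apply Finset.sum_congr rfl; intro s _
        apply Finset.sum_congr rfl; intro t _
        rw [rem n _ (by
          intro x hx
          rw [Multiset.mem_add] at hx
          rcases hx with h | h <;> rw [Multiset.eq_of_mem_replicate h]
          exacts [ha, hb])]
        rw [Multiset.sum_add, Multiset.sum_replicate, Multiset.sum_replicate,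
          smul_eq_mul, smul_eq_mul, gg]

lemma sum_count_sq (n a : ℕ) (ha : 0 < a) :
    (∑ μ : Nat.Partition n, (μ.parts.count a : ℤ) * (μ.parts.count a : ℤ))
      = ∑ s ∈ Finset.Icc 1 n, ∑ t ∈ Finset.Icc 1 n, gg n (max s t * a) := by
  classical
  calc (∑ μ : Nat.Partition n, (μ.parts.count a : ℤ) * (μ.parts.count a : ℤ))
      = ∑ μ : Nat.Partition n, ∑ s ∈ Finset.Icc 1 n, ∑ t ∈ Finset.Icc 1 n,
          if Multiset.replicate (max s t) a ≤ μ.parts then (1:ℤ) else 0 := by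
        apply Finset.sum_congr rfl
        intro μ _
        rw [nat_expand n _ (count_le_n n μ a), Finset.sum_mul_sum]
        apply Finset.sum_congr rfl; intro s _
        apply Finset.sum_congr rfl; intro t _
        rw [iteone_mul_iteone]
        refine if_congr ?_ rfl rfl
        rw [← Multiset.le_count_iff_replicate_le]
        omega
    _ = ∑ s ∈ Finset.Icc 1 n, ∑ t ∈ Finset.Icc 1 n, ∑ μ : Nat.Partition n,
          (if Multiset.replicate (max s t) a ≤ μ.parts then (1:ℤ) else 0) := by
        rw [Finset.sum_comm]
        apply Finset.sum_congr rfl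
        intro s _
        rw [Finset.sum_comm]
    _ = ∑ s ∈ Finset.Icc 1 n, ∑ t ∈ Finset.Icc 1 n, gg n (max s t * a) := by
        apply Finset.sum_congr rfl; intro s _
        apply Finset.sum_congr rfl; intro t _
        rw [rem n _ (fun x hx => by rw [Multiset.eq_of_mem_replicate hx]; exact ha)]
        rw [Multiset.sum_replicate, smul_eq_mul, gg]


lemma pull2 (F : ℕ → ℤ) (Q : Finset (ℕ × ℕ)) (J : Finset ℕ) (c : ℕ → ℤ) (W : ℕ → ℕ → ℤ) :
    (∑ q ∈ Q, F q.1 * ∑ j ∈ J, c j * W j q.2) = ∑ j ∈ J, c j * ∑ q ∈ Q, F q.1 * W j q.2 := by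
  calc (∑ q ∈ Q, F q.1 * ∑ j ∈ J, c j * W j q.2)
      = ∑ q ∈ Q, ∑ j ∈ J, F q.1 * (c j * W j q.2) := by
        apply Finset.sum_congr rfl; intro q _; rw [Finset.mul_sum]
    _ = ∑ j ∈ J, ∑ q ∈ Q, F q.1 * (c j * W j q.2) := Finset.sum_comm
    _ = ∑ j ∈ J, c j * ∑ q ∈ Q, F q.1 * W j q.2 := by
        apply Finset.sum_congr rfl; intro j _
        rw [Finset.mul_sum]
        apply Finset.sum_congr rfl; intro q _
        ring

lemma pull (F : ℕ → ℤ) (Q : Finset (ℕ × ℕ)) (R : ℕ × ℕ → Finset (ℕ × ℕ))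
    (I J : Finset ℕ) (A B : ℕ → ℤ) (E D : ℕ → ℕ → ℤ) :
    (∑ q ∈ Q, F q.1 * ∑ r ∈ R q, (∑ i ∈ I, A i * E i r.1) * (∑ j ∈ J, B j * D j r.2))
      = ∑ i ∈ I, ∑ j ∈ J, A i * B j * (∑ q ∈ Q, F q.1 * ∑ r ∈ R q, E i r.1 * D j r.2) := by
  have inner : ∀ q ∈ Q, (∑ r ∈ R q, (∑ i ∈ I, A i * E i r.1) * (∑ j ∈ J, B j * D j r.2))
      = ∑ i ∈ I, ∑ j ∈ J, A i * B j * ∑ r ∈ R q, E i r.1 * D j r.2 := by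
    intro q _
    calc (∑ r ∈ R q, (∑ i ∈ I, A i * E i r.1) * (∑ j ∈ J, B j * D j r.2))
        = ∑ r ∈ R q, ∑ i ∈ I, ∑ j ∈ J, (A i * E i r.1) * (B j * D j r.2) := by
          apply Finset.sum_congr rfl; intro r _; rw [Finset.sum_mul_sum]
      _ = ∑ i ∈ I, ∑ j ∈ J, ∑ r ∈ R q, (A i * E i r.1) * (B j * D j r.2) := by
          rw [Finset.sum_comm]
          apply Finset.sum_congr rfl; intro i _
          rw [Finset.sum_comm]
      _ = ∑ i ∈ I, ∑ j ∈ J, A i * B j * ∑ r ∈ R q, E i r.1 * D j r.2 := by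
          apply Finset.sum_congr rfl; intro i _
          apply Finset.sum_congr rfl; intro j _
          rw [Finset.mul_sum]
          apply Finset.sum_congr rfl; intro r _
          ring
  calc (∑ q ∈ Q, F q.1 * ∑ r ∈ R q, (∑ i ∈ I, A i * E i r.1) * (∑ j ∈ J, B j * D j r.2))
      = ∑ q ∈ Q, ∑ i ∈ I, ∑ j ∈ J, F q.1 * (A i * B j * ∑ r ∈ R q, E i r.1 * D j r.2) := by
        apply Finset.sum_congr rfl; intro q hq
        rw [inner q hq, Finset.mul_sum]
        apply Finset.sum_congr rfl; intro i _
        rw [Finset.mul_sum]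
    _ = ∑ i ∈ I, ∑ j ∈ J, ∑ q ∈ Q, F q.1 * (A i * B j * ∑ r ∈ R q, E i r.1 * D j r.2) := by
        rw [Finset.sum_comm]
        apply Finset.sum_congr rfl; intro i _
        rw [Finset.sum_comm]
    _ = ∑ i ∈ I, ∑ j ∈ J, A i * B j * (∑ q ∈ Q, F q.1 * ∑ r ∈ R q, E i r.1 * D j r.2) := by
        apply Finset.sum_congr rfl; intro i _
        apply Finset.sum_congr rfl; intro j _
        rw [Finset.mul_sum]
        apply Finset.sum_congr rfl; intro q _
        ring

end Aux

section Main
open Finset PowerSeries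

lemma Gs_dd (a : ℕ) : Gs a = PowerSeries.mk (dd a) := rfl

/-- `Σₙ (Σ_{μ⊢n} (M_μ^{(k)})²) xⁿ = P(x)·(F_k(x)² + Σ_j k² p^{2j} x^{k pʲ}/(1 - x^{k pʲ})²)`:
equality of `n`-th coefficients for every `n`, with the sums over `j` truncated at `j ≤ n`
(the omitted summands have order `> n`). -/
theorem secondMoment_genFun (p k : ℕ) (hp : p.Prime) (hk0 : 0 < k) (hk : Nat.Coprime k p) :
    ∀ n : ℕ,
      PowerSeries.coeff n
          (PowerSeries.mk fun n => ∑ μ : Nat.Partition n, ((Msum p k μ.parts : ℤ)) ^ 2) =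
        PowerSeries.coeff n
          (partitionGF *
            (Fk p k n ^ 2 +
              ∑ j ∈ Finset.range (n + 1),
                PowerSeries.C (((k * p ^ j : ℕ) : ℤ) ^ 2) * PowerSeries.X ^ (k * p ^ j) *
                  (PowerSeries.invOfUnit (1 - PowerSeries.X ^ (k * p ^ j)) 1) ^ 2)) := by
  intro n
  classical
  have hp2 : 2 ≤ p := hp.two_le
  have hapos : ∀ j : ℕ, 0 < k * p ^ j := fun j => one_le_apow hp2 hk0 j
  -- notation
  set A : ℕ → ℤ := fun j => ((k * p ^ j : ℕ) : ℤ) with hA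
  set Pfun : ℕ → ℤ := fun u => (Nat.card (Nat.Partition u) : ℤ) with hPfun
  set T1 : ℕ → ℕ → ℤ := fun i j => ∑ s ∈ Finset.Icc 1 n, ∑ t ∈ Finset.Icc 1 n,
      gg n (s * (k * p ^ i) + t * (k * p ^ j)) with hT1
  set T2 : ℕ → ℤ := fun j => ∑ s ∈ Finset.Icc 1 n, ∑ t ∈ Finset.range (n+1),
      gg n (s * (k * p ^ j) + t * (k * p ^ j)) with hT2
  -- LHS
  have hLHS : (PowerSeries.coeff n
        (PowerSeries.mk fun n => ∑ μ : Nat.Partition n, ((Msum p k μ.parts : ℤ)) ^ 2))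
      = (∑ i ∈ Finset.range (n+1), ∑ j ∈ Finset.range (n+1), A i * A j * T1 i j)
        + ∑ j ∈ Finset.range (n+1), A j * A j * T2 j := by
    rw [PowerSeries.coeff_mk]
    have hparts : ∀ μ : Nat.Partition n, ∀ x ∈ μ.parts, x ≤ n := by
      intro μ x hx
      have := Multiset.single_le_sum (fun y _ => Nat.zero_le y) x hx
      rwa [μ.parts_sum] at this
    calc (∑ μ : Nat.Partition n, ((Msum p k μ.parts : ℤ)) ^ 2)
        = ∑ μ : Nat.Partition n,
            (∑ j ∈ Finset.range (n+1), A j * (μ.parts.count (k * p ^ j) : ℤ)) ^ 2 := by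
          apply Finset.sum_congr rfl
          intro μ _
          rw [msum_eq p k n hp2 hk0 μ.parts (hparts μ), Nat.cast_sum]
          simp only [hA]
          push_cast
          ring
      _ = ∑ μ : Nat.Partition n, ∑ i ∈ Finset.range (n+1), ∑ j ∈ Finset.range (n+1),
            (A i * (μ.parts.count (k * p ^ i) : ℤ)) * (A j * (μ.parts.count (k * p ^ j) : ℤ)) := by
          apply Finset.sum_congr rfl
          intro μ _
          rw [sq, Finset.sum_mul_sum]
      _ = ∑ i ∈ Finset.range (n+1), ∑ j ∈ Finset.range (n+1), ∑ μ : Nat.Partition n,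
            (A i * (μ.parts.count (k * p ^ i) : ℤ)) * (A j * (μ.parts.count (k * p ^ j) : ℤ)) := by
          rw [Finset.sum_comm]
          apply Finset.sum_congr rfl
          intro i _
          rw [Finset.sum_comm]
      _ = ∑ i ∈ Finset.range (n+1), ∑ j ∈ Finset.range (n+1),
            A i * A j * ∑ μ : Nat.Partition n,
              (μ.parts.count (k * p ^ i) : ℤ) * (μ.parts.count (k * p ^ j) : ℤ) := by
          apply Finset.sum_congr rfl; intro i _
          apply Finset.sum_congr rfl; intro j _
          rw [Finset.mul_sum]
          apply Finset.sum_congr rfl; intro μ _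
          ring
      _ = ∑ i ∈ Finset.range (n+1), ∑ j ∈ Finset.range (n+1),
            (A i * A j * T1 i j + if i = j then A i * A j * T2 j else 0) := by
          apply Finset.sum_congr rfl; intro i _
          apply Finset.sum_congr rfl; intro j _
          by_cases hij : i = j
          · subst hij
            rw [sum_count_sq n (k * p ^ i) (hapos i), star n (k * p ^ i) (hapos i),
              if_pos rfl]
            simp only [hT1, hT2]
            rw [mul_add]
          · have hne : k * p ^ i ≠ k * p ^ j := fun h => hij (apow_inj hp2 hk0 h)
            rw [sum_count_mul_count n (k * p ^ i) (k * p ^ j) (hapos i) (hapos j) hne,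
              if_neg hij, add_zero]
      _ = (∑ i ∈ Finset.range (n+1), ∑ j ∈ Finset.range (n+1), A i * A j * T1 i j)
            + ∑ j ∈ Finset.range (n+1), A j * A j * T2 j := by
          rw [← Finset.sum_add_distrib]
          apply Finset.sum_congr rfl
          intro i hi
          rw [Finset.sum_add_distrib]
          congr 1
          rw [Finset.sum_ite_eq, if_pos hi]
  -- RHS
  have hFk : Fk p k n
      = PowerSeries.mk (fun v => ∑ j ∈ Finset.range (n+1), A j * ee (k * p ^ j) v) := by
    simp only [Fk]
    have h1 : ∀ j ∈ Finset.range (n+1),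
        PowerSeries.C ((k * p ^ j : ℕ) : ℤ) * PowerSeries.X ^ (k * p ^ j) *
          PowerSeries.invOfUnit (1 - PowerSeries.X ^ (k * p ^ j)) 1
        = PowerSeries.C ((k * p ^ j : ℕ) : ℤ) * PowerSeries.mk (ee (k * p ^ j)) := by
      intro j _
      rw [mul_assoc, invOfUnit_eq_Gs _ (hapos j), Xpow_mul_Gs _ (hapos j)]
    rw [Finset.sum_congr rfl h1]
    ext v
    rw [PowerSeries.coeff_mk, map_sum]
    apply Finset.sum_congr rfl
    intro j _
    rw [PowerSeries.coeff_C_mul, PowerSeries.coeff_mk]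
  have hSnd : (∑ j ∈ Finset.range (n + 1),
        PowerSeries.C (((k * p ^ j : ℕ) : ℤ) ^ 2) * PowerSeries.X ^ (k * p ^ j) *
          (PowerSeries.invOfUnit (1 - PowerSeries.X ^ (k * p ^ j)) 1) ^ 2)
      = ∑ j ∈ Finset.range (n + 1),
          PowerSeries.C (((k * p ^ j : ℕ) : ℤ) ^ 2) *
            (PowerSeries.mk (ee (k * p ^ j)) * PowerSeries.mk (dd (k * p ^ j))) := by
    apply Finset.sum_congr rfl
    intro j _
    rw [invOfUnit_eq_Gs _ (hapos j), ← Xpow_mul_Gs _ (hapos j), ← Gs_dd]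
    ring
  have hRHS : PowerSeries.coeff n
        (partitionGF *
          (Fk p k n ^ 2 +
            ∑ j ∈ Finset.range (n + 1),
              PowerSeries.C (((k * p ^ j : ℕ) : ℤ) ^ 2) * PowerSeries.X ^ (k * p ^ j) *
                (PowerSeries.invOfUnit (1 - PowerSeries.X ^ (k * p ^ j)) 1) ^ 2))
      = (∑ i ∈ Finset.range (n+1), ∑ j ∈ Finset.range (n+1), A i * A j * T1 i j)
        + ∑ j ∈ Finset.range (n+1), A j * A j * T2 j := by
    rw [hFk, hSnd]
    unfold partitionGF
    rw [PowerSeries.coeff_mul]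
    calc (∑ q ∈ Finset.HasAntidiagonal.antidiagonal n,
            PowerSeries.coeff q.1 (PowerSeries.mk fun u => (Nat.card (Nat.Partition u) : ℤ)) *
            PowerSeries.coeff q.2
              ((PowerSeries.mk fun v => ∑ j ∈ Finset.range (n+1), A j * ee (k * p ^ j) v) ^ 2 +
                ∑ j ∈ Finset.range (n + 1),
                  PowerSeries.C (((k * p ^ j : ℕ) : ℤ) ^ 2) *
                    (PowerSeries.mk (ee (k * p ^ j)) * PowerSeries.mk (dd (k * p ^ j)))))
        = ∑ q ∈ Finset.HasAntidiagonal.antidiagonal n, Pfun q.1 *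
            ((∑ r ∈ Finset.HasAntidiagonal.antidiagonal q.2,
                (∑ i ∈ Finset.range (n+1), A i * ee (k * p ^ i) r.1) *
                (∑ j ∈ Finset.range (n+1), A j * ee (k * p ^ j) r.2))
              + ∑ j ∈ Finset.range (n+1), (A j)^2 *
                  ∑ r ∈ Finset.HasAntidiagonal.antidiagonal q.2, ee (k * p ^ j) r.1 * dd (k * p ^ j) r.2) := by
          apply Finset.sum_congr rfl
          intro q _
          congr 1
          · rw [PowerSeries.coeff_mk]
          · rw [map_add]
            congr 1
            · rw [sq, PowerSeries.coeff_mul]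
              apply Finset.sum_congr rfl
              intro r _
              rw [PowerSeries.coeff_mk, PowerSeries.coeff_mk]
            · rw [map_sum]
              apply Finset.sum_congr rfl
              intro j _
              rw [PowerSeries.coeff_C_mul, PowerSeries.coeff_mul]
              congr 1
              apply Finset.sum_congr rfl
              intro r _
              rw [PowerSeries.coeff_mk, PowerSeries.coeff_mk]
      _ = (∑ q ∈ Finset.HasAntidiagonal.antidiagonal n, Pfun q.1 *
            (∑ r ∈ Finset.HasAntidiagonal.antidiagonal q.2,
                (∑ i ∈ Finset.range (n+1), A i * ee (k * p ^ i) r.1) *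
                (∑ j ∈ Finset.range (n+1), A j * ee (k * p ^ j) r.2)))
          + ∑ q ∈ Finset.HasAntidiagonal.antidiagonal n, Pfun q.1 *
              (∑ j ∈ Finset.range (n+1), (A j)^2 *
                ∑ r ∈ Finset.HasAntidiagonal.antidiagonal q.2, ee (k * p ^ j) r.1 * dd (k * p ^ j) r.2) := by
          rw [← Finset.sum_add_distrib]
          apply Finset.sum_congr rfl
          intro q _
          rw [mul_add]
      _ = (∑ i ∈ Finset.range (n+1), ∑ j ∈ Finset.range (n+1), A i * A j * T1 i j)
            + ∑ j ∈ Finset.range (n+1), A j * A j * T2 j := by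
          congr 1
          · rw [pull Pfun (Finset.HasAntidiagonal.antidiagonal n) (fun q => Finset.HasAntidiagonal.antidiagonal q.2)
              (Finset.range (n+1)) (Finset.range (n+1)) A A
              (fun i v => ee (k * p ^ i) v) (fun j v => ee (k * p ^ j) v)]
            apply Finset.sum_congr rfl; intro i _
            apply Finset.sum_congr rfl; intro j _
            congr 1
            rw [conv_gen n Pfun (ee (k * p ^ i)) (ee (k * p ^ j)) (Finset.Icc 1 n)
              (Finset.Icc 1 n) (fun s => s * (k * p ^ i)) (fun t => t * (k * p ^ j))
              (fun v hv => ee_expand (hapos i) hv) (fun v hv => ee_expand (hapos j) hv)]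
            simp only [hT1, hPfun, gg]
          · rw [pull2 Pfun (Finset.HasAntidiagonal.antidiagonal n) (Finset.range (n+1)) (fun j => (A j)^2)
              (fun j w => ∑ r ∈ Finset.HasAntidiagonal.antidiagonal w, ee (k * p ^ j) r.1 * dd (k * p ^ j) r.2)]
            apply Finset.sum_congr rfl; intro j _
            rw [conv_gen n Pfun (ee (k * p ^ j)) (dd (k * p ^ j)) (Finset.Icc 1 n)
              (Finset.range (n+1)) (fun s => s * (k * p ^ j)) (fun t => t * (k * p ^ j))
              (fun v hv => ee_expand (hapos j) hv) (fun v hv => dd_expand (hapos j) hv)]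
            simp only [hT2, hPfun, gg, sq]
  rw [hLHS, hRHS]
end Main
end
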